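/- arXiv:1203.0843 — 2 statements merged into one kernel-verified Lean document; each statement's English description precedes it below -/
import Mathlib

section
/- Let G be a connected graph with minimum degree at least three, let v be a vertex of G of degree n ≥ 4, and let G' be the graph obtained from G by splitting v into two vertices each of degree at least three. Then γ_M(G') ≤ γ_M(G). -/
/-- A finite multigraph (loops and multiple edges allowed), presented by its darts
(edge-ends): `dinv` is the fixed-point-free involution pairing the two darts of each
edge, and `dvert` sends a dart to the vertex it is attached to. -/
structure Multigraph : Type 1 where
  V : Type
  D : Type
  fintypeV : Fintype V
  fintypeD : Fintype D
  decEqV : DecidableEq V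
  decEqD : DecidableEq D
  dinv : D → D
  dinv_invol : ∀ d, dinv (dinv d) = d
  dinv_ne : ∀ d, dinv d ≠ d
  dvert : D → V

attribute [instance] Multigraph.fintypeV Multigraph.fintypeD Multigraph.decEqV Multigraph.decEqD

namespace Multigraph

variable (G : Multigraph)

/-- The number of edges `|E(G)|` (darts come in pairs). -/
def edgeCount : ℕ := Fintype.card G.D / 2

/-- The number of vertices `|V(G)|`. -/
def vertexCount : ℕ := Fintype.card G.V

/-- The Betti number (cycle rank) `β(G) = |E(G)| - |V(G)| + 1`. -/
def betti : ℕ := G.edgeCount + 1 - G.vertexCount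

/-- The degree of a vertex: the number of darts attached to it (a loop counts twice). -/
def degree (v : G.V) : ℕ := Fintype.card {d : G.D // G.dvert d = v}

/-- Two vertices are adjacent if some edge joins them. -/
def Adj (u v : G.V) : Prop := ∃ d, G.dvert d = u ∧ G.dvert (G.dinv d) = v

/-- `G` is connected. -/
def Connected : Prop := Nonempty G.V ∧ ∀ u v : G.V, Relation.ReflTransGen G.Adj u v

/-- A rotation system on `G`: a permutation of the darts whose orbits are exactly the
sets of darts attached to each vertex (a cyclic order of the edge-ends at each vertex).
Rotation systems are in 1-1 correspondence with cellular embeddings of `G` into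
orientable surfaces (and with joint-trees of `G`). -/
structure RotationSystem where
  σ : Equiv.Perm G.D
  vert_eq : ∀ d, G.dvert (σ d) = G.dvert d
  orbit : ∀ d d', G.dvert d = G.dvert d' → ∃ k : ℕ, (σ ^ k) d = d'

/-- The number of orbits of a self-map of a finite type. -/
noncomputable def orbitCount {α : Type} (f : α → α) : ℕ :=
  Nat.card (Quot fun a b => f a = b)

/-- The number of faces of the embedding determined by a rotation system: the number
of orbits of `σ ∘ dinv` (face-tracing). -/
noncomputable def faceCount (ρ : G.RotationSystem) : ℕ :=
  orbitCount fun d => ρ.σ (G.dinv d)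

/-- The genus of the orientable surface of the embedding determined by a rotation
system, via the Euler formula `|V| - |E| + |F| = 2 - 2g`. -/
noncomputable def embGenus (ρ : G.RotationSystem) : ℕ :=
  ((2 + (G.edgeCount : ℤ) - (G.vertexCount : ℤ) - (G.faceCount ρ : ℤ)) / 2).toNat

/-- The maximum genus `γ_M(G)`: the largest genus of an orientable surface admitting a
cellular embedding of `G`. -/
noncomputable def maxGenus : ℕ := sSup {k : ℕ | ∃ ρ : G.RotationSystem, G.embGenus ρ = k}

/-- `G` is upper embeddable if `γ_M(G) = ⌊β(G)/2⌋`. -/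
def UpperEmbeddable : Prop := G.maxGenus = G.betti / 2

/-- `G - v`: delete the vertex `v` together with all edges incident to it. -/
def deleteVertex (v : G.V) : Multigraph where
  V := {u : G.V // u ≠ v}
  D := {d : G.D // G.dvert d ≠ v ∧ G.dvert (G.dinv d) ≠ v}
  fintypeV := by infer_instance
  fintypeD := by infer_instance
  decEqV := by infer_instance
  decEqD := by infer_instance
  dinv := fun d => ⟨G.dinv d.1, d.2.2, by rw [G.dinv_invol]; exact d.2.1⟩
  dinv_invol := fun d => Subtype.ext (G.dinv_invol d.1)
  dinv_ne := fun d h => G.dinv_ne d.1 (congrArg Subtype.val h)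
  dvert := fun d => ⟨G.dvert d.1, d.2.1⟩

/-- The multigraph with vertex set `Fin m` and `k` edges whose endpoints are given by
`ends`. -/
def ofEdges (m k : ℕ) (ends : Fin k → Fin m × Fin m) : Multigraph where
  V := Fin m
  D := Fin k × Bool
  fintypeV := by infer_instance
  fintypeD := by infer_instance
  decEqV := by infer_instance
  decEqD := by infer_instance
  dinv := fun d => (d.1, !d.2)
  dinv_invol := fun d => by simp
  dinv_ne := fun d h => by simpa using congrArg Prod.snd h
  dvert := fun d => if d.2 then (ends d.1).1 else (ends d.1).2

end Multigraph
namespace Multigraph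

/-- Data witnessing that `G'` is obtained from `G` by splitting the vertex `v` into the
two vertices `v₁` and `v₂`: `v₁` and `v₂` are joined by a new edge (the dart `newDart`),
every other edge of `G'` corresponds to an edge of `G`, and each former edge-end at `v`
is attached to `v₁` or to `v₂`. -/
structure SplitData (G G' : Multigraph) (v : G.V) (v₁ v₂ : G'.V) where
  ne12 : v₁ ≠ v₂
  newDart : G'.D
  hdart₁ : G'.dvert newDart = v₁
  hdart₂ : G'.dvert (G'.dinv newDart) = v₂
  fD : G.D ≃ {d : G'.D // d ≠ newDart ∧ d ≠ G'.dinv newDart}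
  fV : G'.V → G.V
  hv₁ : fV v₁ = v
  hv₂ : fV v₂ = v
  fiber : ∀ w, fV w = v → w = v₁ ∨ w = v₂
  inj : ∀ w w', fV w = fV w' → fV w = v ∨ w = w'
  surj : Function.Surjective fV
  vert_compat : ∀ d : G.D, fV (G'.dvert (fD d).1) = G.dvert d
  inv_compat : ∀ d : G.D, ((fD (G.dinv d)) : G'.D) = G'.dinv ((fD d) : G'.D)

/-- `G'` is obtained from `G` by splitting the vertex `v` into two vertices. -/
def IsSplitAt (G G' : Multigraph) (v : G.V) : Prop :=
  ∃ v₁ v₂ : G'.V, Nonempty (SplitData G G' v v₁ v₂)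

/-- `G'` is obtained from `G` by a single vertex-splitting operation. -/
def SplitStep (G G' : Multigraph) : Prop := ∃ v : G.V, IsSplitAt G G' v

/-- Isomorphism of multigraphs. -/
def Iso (G H : Multigraph) : Prop :=
  ∃ (fV : G.V ≃ H.V) (fD : G.D ≃ H.D),
    (∀ d, fD (G.dinv d) = H.dinv (fD d)) ∧ ∀ d, fV (G.dvert d) = H.dvert (fD d)

/-- The Möbius ladder `M_{2n}`: the cubic graph obtained from the `2n`-cycle
`v₁ v₂ … v_{2n}` (here `0`-indexed on `Fin (2*n)`) by adding the `n` rungs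
`(v_i, v_{n+i})`, `i = 1, …, n`. -/
def mobiusLadder (n : ℕ) (hn : 0 < n) : Multigraph :=
  ofEdges (2*n) (3*n) (fun j =>
    if h : (j : ℕ) < 2*n then
      (⟨(j : ℕ), h⟩, ⟨((j : ℕ) + 1) % (2*n), Nat.mod_lt _ (by omega)⟩)
    else
      (⟨(j : ℕ) - 2*n, by have := j.isLt; omega⟩,
       ⟨(j : ℕ) - 2*n + n, by have := j.isLt; omega⟩))

/-- The neckband `N_{2n} = C_{2n} + R`: the `2n`-cycle `v₁ v₂ … v_{2n}` (here
`0`-indexed on `Fin (2*n)`) together with the chords `(v_{2i-1}, v_{2i+2})`,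
`i = 1, …, n`, indices mod `2n`. -/
def neckband (n : ℕ) (hn : 0 < n) : Multigraph :=
  ofEdges (2*n) (3*n) (fun j =>
    if h : (j : ℕ) < 2*n then
      (⟨(j : ℕ), h⟩, ⟨((j : ℕ) + 1) % (2*n), Nat.mod_lt _ (by omega)⟩)
    else
      (⟨2*((j : ℕ) - 2*n), by have := j.isLt; omega⟩,
       ⟨(2*((j : ℕ) - 2*n) + 3) % (2*n), Nat.mod_lt _ (by omega)⟩))

/-- The spiral `S_m^n`: vertices `v₁, …, v_{m+2n}` (here `0`-indexed on
`Fin (m+2*n)`), with the `m`-cycle `v₁ v₂ … v_m` as `p₀` and, for `1 ≤ i ≤ n`, the ear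
`p_i` consisting of the `3`-path `v_{m+2i-2} v_{m+2i-1} v_{m+2i}` joined to `v_i` when
`i ≤ m - 1` and to `v_{2i-m+1}` when `i > m - 1`. -/
def spiral (m n : ℕ) (hm : 3 ≤ m) : Multigraph :=
  ofEdges (m + 2*n) (m + 3*n) (fun j =>
    if h : (j : ℕ) < m then
      (⟨(j : ℕ), by omega⟩, ⟨((j : ℕ) + 1) % m, lt_of_lt_of_le (Nat.mod_lt _ (by omega)) (by omega)⟩)
    else
      if hc : ((j : ℕ) - m) % 3 = 0 then
        (⟨m + 2*(((j : ℕ) - m)/3 + 1) - 3, by have := j.isLt; omega⟩,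
         ⟨m + 2*(((j : ℕ) - m)/3 + 1) - 2, by have := j.isLt; omega⟩)
      else if hc1 : ((j : ℕ) - m) % 3 = 1 then
        (⟨m + 2*(((j : ℕ) - m)/3 + 1) - 2, by have := j.isLt; omega⟩,
         ⟨m + 2*(((j : ℕ) - m)/3 + 1) - 1, by have := j.isLt; omega⟩)
      else
        (⟨m + 2*(((j : ℕ) - m)/3 + 1) - 1, by have := j.isLt; omega⟩,
         ⟨if ((j : ℕ) - m)/3 + 1 ≤ m - 1 then ((j : ℕ) - m)/3
           else 2*(((j : ℕ) - m)/3 + 1) - m,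
          by have := j.isLt; split <;> omega⟩))

/-- A circuit in a multigraph: a cyclic sequence of darts successively attached
(head-to-tail), visiting pairwise distinct vertices and using pairwise distinct edges.
(A loop is a circuit of length `1`, a pair of parallel edges a circuit of length `2`.) -/
structure Circuit (G : Multigraph) where
  darts : List G.D
  nonempty : darts ≠ []
  chain : ∀ i : Fin darts.length,
    G.dvert (G.dinv (darts.get i)) =
      G.dvert (darts.get ⟨((i : ℕ) + 1) % darts.length, Nat.mod_lt _ (List.length_pos_iff.mpr nonempty)⟩)
  vert_nodup : (darts.map G.dvert).Nodup
  edge_nodup : ∀ i j : Fin darts.length, i ≠ j →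
    darts.get i ≠ darts.get j ∧ darts.get i ≠ G.dinv (darts.get j)

/-- Two circuits are the same if they use exactly the same edges. -/
def Circuit.Same {G : Multigraph} (C C' : G.Circuit) : Prop :=
  ∀ d, (d ∈ C.darts ∨ G.dinv d ∈ C.darts) ↔ (d ∈ C'.darts ∨ G.dinv d ∈ C'.darts)

/-- A vertex lies on a circuit. -/
def Circuit.Mem {G : Multigraph} (v : G.V) (C : G.Circuit) : Prop :=
  v ∈ C.darts.map G.dvert

/-- A multigraph is a cactus if all of its circuits are pairwise vertex-disjoint. -/
def IsCactus (G : Multigraph) : Prop :=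
  ∀ C C' : G.Circuit, (∃ v, Circuit.Mem v C ∧ Circuit.Mem v C') → C.Same C'

end Multigraph

namespace Multigraph

private lemma eqvGen_perm {α : Type} [Fintype α] [DecidableEq α] (f : Equiv.Perm α) {a b : α}
    (h : Relation.EqvGen (fun a b => f a = b) a b) : ∃ k : ℕ, (f ^ k) a = b := by
  induction h with
  | rel x y hxy => exact ⟨1, by simpa using hxy⟩
  | refl x => exact ⟨0, rfl⟩
  | symm x y _ ih =>
    obtain ⟨k, hk⟩ := ih
    refine ⟨Fintype.card (Equiv.Perm α) * k - k, ?_⟩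
    have h1 : 1 ≤ Fintype.card (Equiv.Perm α) := Fintype.card_pos
    subst hk
    rw [← Equiv.Perm.mul_apply, ← pow_add]
    have h2 : Fintype.card (Equiv.Perm α) * k - k + k = Fintype.card (Equiv.Perm α) * k := by
      have := Nat.mul_le_mul_right k h1
      omega
    rw [h2, pow_mul, pow_card_eq_one, one_pow, Equiv.Perm.one_apply]
  | trans x y z _ _ ih1 ih2 =>
    obtain ⟨k1, hk1⟩ := ih1
    obtain ⟨k2, hk2⟩ := ih2
    exact ⟨k2 + k1, by rw [pow_add, Equiv.Perm.mul_apply, hk1, hk2]⟩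

private lemma perm_apply_inv_self {α : Type} (f : Equiv.Perm α) (x : α) : f (f⁻¹ x) = x :=
  Equiv.apply_symm_apply f x

private lemma perm_inv_apply_self {α : Type} (f : Equiv.Perm α) (x : α) : f⁻¹ (f x) = x :=
  Equiv.symm_apply_apply f x

section Split

variable {G G' : Multigraph} {v : G.V} {v₁ v₂ : G'.V}

private lemma dvert_pow (ρ' : G'.RotationSystem) (m : ℕ) (x : G'.D) :
    G'.dvert ((ρ'.σ ^ m) x) = G'.dvert x := by
  induction m with
  | zero => rfl
  | succ m ih => rw [pow_succ', Equiv.Perm.mul_apply, ρ'.vert_eq, ih]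

private lemma degree_le_one (ρ' : G'.RotationSystem) (x : G'.D) (hx : ρ'.σ x = x) :
    G'.degree (G'.dvert x) ≤ 1 := by
  have key : ∀ d, G'.dvert d = G'.dvert x → d = x := by
    intro d hd
    obtain ⟨k, hk⟩ := ρ'.orbit x d hd.symm
    have hfix : ∀ m, (ρ'.σ ^ m) x = x := by
      intro m
      induction m with
      | zero => rfl
      | succ m ih => rw [pow_succ, Equiv.Perm.mul_apply, hx, ih]
    rw [hfix k] at hk; exact hk.symm
  refine Fintype.card_le_one_iff.mpr ?_
  rintro ⟨a, ha⟩ ⟨b, hb⟩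
  exact Subtype.ext ((key a ha).trans (key b hb).symm)

private lemma cardD (S : SplitData G G' v v₁ v₂) : Fintype.card G'.D = Fintype.card G.D + 2 := by
  have h1 : Fintype.card G.D =
      Fintype.card {d : G'.D // d ≠ S.newDart ∧ d ≠ G'.dinv S.newDart} :=
    Fintype.card_congr S.fD
  have e1 : {d : G'.D // d ≠ S.newDart ∧ d ≠ G'.dinv S.newDart} ≃
      {d : G'.D // ¬(d = S.newDart ∨ d = G'.dinv S.newDart)} :=
    Equiv.subtypeEquivRight (fun d => by simp [not_or])
  have e2 : {d : G'.D // d = S.newDart ∨ d = G'.dinv S.newDart} ≃ Bool := {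
    toFun := fun d => decide (d.1 = S.newDart)
    invFun := fun b =>
      if b then ⟨S.newDart, Or.inl rfl⟩ else ⟨G'.dinv S.newDart, Or.inr rfl⟩
    left_inv := by
      rintro ⟨d, hd | hd⟩ <;> subst hd <;> simp [G'.dinv_ne S.newDart]
    right_inv := by
      intro b
      cases b <;> simp [G'.dinv_ne S.newDart] }
  have h2 : Fintype.card {d : G'.D // d = S.newDart ∨ d = G'.dinv S.newDart} = 2 := by
    rw [Fintype.card_congr e2, Fintype.card_bool]
  have h3 := Fintype.card_subtype_compl (fun d : G'.D => d = S.newDart ∨ d = G'.dinv S.newDart)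
  have h4 : Fintype.card {d : G'.D // d = S.newDart ∨ d = G'.dinv S.newDart} ≤
      Fintype.card G'.D := Fintype.card_subtype_le _
  rw [Fintype.card_congr e1] at h1
  omega

private lemma cardV (S : SplitData G G' v v₁ v₂) : Fintype.card G'.V = Fintype.card G.V + 1 := by
  have e : {w : G'.V // ¬(w = v₂)} ≃ G.V := by
    refine Equiv.ofBijective (fun w => S.fV w.1) ⟨?_, ?_⟩
    · rintro ⟨w, hw⟩ ⟨w', hw'⟩ h
      simp only at h
      rcases S.inj w w' h with hv | he
      · have hw1 : w = v₁ := by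
          rcases S.fiber w hv with h' | h'
          · exact h'
          · exact absurd h' hw
        have hv' : S.fV w' = v := by rw [← h]; exact hv
        have hw2 : w' = v₁ := by
          rcases S.fiber w' hv' with h' | h'
          · exact h'
          · exact absurd h' hw'
        exact Subtype.ext (hw1.trans hw2.symm)
      · exact Subtype.ext he
    · intro u
      obtain ⟨w, hw⟩ := S.surj u
      by_cases hwv : w = v₂
      · refine ⟨⟨v₁, fun h => S.ne12 h⟩, ?_⟩
        simp only
        subst hwv
        rw [S.hv₁, ← S.hv₂]
        exact hw
      · exact ⟨⟨w, hwv⟩, hw⟩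
  have h1 : Fintype.card {w : G'.V // ¬(w = v₂)} = Fintype.card G.V := Fintype.card_congr e
  have h2 := Fintype.card_subtype_compl (fun w : G'.V => w = v₂)
  have h3 : Fintype.card {w : G'.V // w = v₂} = 1 := Fintype.card_subtype_eq v₂
  have h4 : Fintype.card {w : G'.V // w = v₂} ≤ Fintype.card G'.V :=
    Fintype.card_le_of_injective (fun w => w.1) Subtype.coe_injective
  omega


section Data
variable (S : SplitData G G' v v₁ v₂) (ρ' : G'.RotationSystem)

private def E1 : G'.D := S.newDart
private def E2 : G'.D := G'.dinv S.newDart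

private lemma E1_ne_E2 : E1 S ≠ E2 S := (G'.dinv_ne S.newDart).symm

private lemma dinv_E1 : G'.dinv (E1 S) = E2 S := rfl
private lemma dinv_E2 : G'.dinv (E2 S) = E1 S := G'.dinv_invol _

private lemma dvert_E1 : G'.dvert (E1 S) = v₁ := S.hdart₁
private lemma dvert_E2 : G'.dvert (E2 S) = v₂ := S.hdart₂

private lemma sE1_ne (h₁ : 3 ≤ G'.degree v₁) : ρ'.σ (E1 S) ≠ E1 S := by
  intro h
  have := degree_le_one ρ' (E1 S) h
  rw [dvert_E1] at this
  omega

private lemma sE2_ne (h₂ : 3 ≤ G'.degree v₂) : ρ'.σ (E2 S) ≠ E2 S := by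
  intro h
  have := degree_le_one ρ' (E2 S) h
  rw [dvert_E2] at this
  omega

private lemma sE2_ne' : ρ'.σ (E2 S) ≠ E1 S := by
  intro h
  have h1 : G'.dvert (ρ'.σ (E2 S)) = v₂ := by rw [ρ'.vert_eq, dvert_E2]
  rw [h, dvert_E1] at h1
  exact S.ne12 h1

private lemma sE1_ne' : ρ'.σ (E1 S) ≠ E2 S := by
  intro h
  have h1 : G'.dvert (ρ'.σ (E1 S)) = v₁ := by rw [ρ'.vert_eq, dvert_E1]
  rw [h, dvert_E2] at h1
  exact S.ne12 h1.symm

private lemma siE1_ne (h₁ : 3 ≤ G'.degree v₁) : ρ'.σ⁻¹ (E1 S) ≠ E1 S := by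
  intro h
  refine sE1_ne S ρ' h₁ ?_
  conv_lhs => rw [← h]
  rw [perm_apply_inv_self]

private lemma siE2_ne (h₂ : 3 ≤ G'.degree v₂) : ρ'.σ⁻¹ (E2 S) ≠ E2 S := by
  intro h
  refine sE2_ne S ρ' h₂ ?_
  conv_lhs => rw [← h]
  rw [perm_apply_inv_self]

private lemma siE1_ne' : ρ'.σ⁻¹ (E1 S) ≠ E2 S := by
  intro h
  exact sE2_ne' S ρ' (by rw [← h, perm_apply_inv_self])

private lemma siE2_ne' : ρ'.σ⁻¹ (E2 S) ≠ E1 S := by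
  intro h
  exact sE1_ne' S ρ' (by rw [← h, perm_apply_inv_self])

private def sig (x : G'.D) : G'.D :=
  if ρ'.σ x = E1 S then ρ'.σ (E2 S) else if ρ'.σ x = E2 S then ρ'.σ (E1 S) else ρ'.σ x

private def tau (x : G'.D) : G'.D :=
  if ρ'.σ⁻¹ x = E1 S then ρ'.σ⁻¹ (E2 S) else if ρ'.σ⁻¹ x = E2 S then ρ'.σ⁻¹ (E1 S)
    else ρ'.σ⁻¹ x

private lemma sig_ne (h₁ : 3 ≤ G'.degree v₁) (h₂ : 3 ≤ G'.degree v₂) (x : G'.D) :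
    sig S ρ' x ≠ E1 S ∧ sig S ρ' x ≠ E2 S := by
  unfold sig
  split_ifs with h1 h2
  · exact ⟨sE2_ne' S ρ', sE2_ne S ρ' h₂⟩
  · exact ⟨sE1_ne S ρ' h₁, sE1_ne' S ρ'⟩
  · exact ⟨h1, h2⟩

private lemma tau_ne (h₁ : 3 ≤ G'.degree v₁) (h₂ : 3 ≤ G'.degree v₂) (x : G'.D) :
    tau S ρ' x ≠ E1 S ∧ tau S ρ' x ≠ E2 S := by
  unfold tau
  split_ifs with h1 h2
  · exact ⟨siE2_ne' S ρ', siE2_ne S ρ' h₂⟩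
  · exact ⟨siE1_ne S ρ' h₁, siE1_ne' S ρ'⟩
  · exact ⟨h1, h2⟩

private lemma tau_sig (x : G'.D) (hx1 : x ≠ E1 S) (hx2 : x ≠ E2 S) :
    tau S ρ' (sig S ρ' x) = x := by
  by_cases h1 : ρ'.σ x = E1 S
  · have e1 : sig S ρ' x = ρ'.σ (E2 S) := by unfold sig; rw [if_pos h1]
    rw [e1]
    unfold tau
    rw [perm_inv_apply_self, if_neg (fun h => E1_ne_E2 S h.symm), if_pos rfl, ← h1,
      perm_inv_apply_self]
  · by_cases h2 : ρ'.σ x = E2 S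
    · have e1 : sig S ρ' x = ρ'.σ (E1 S) := by unfold sig; rw [if_neg h1, if_pos h2]
      rw [e1]
      unfold tau
      rw [perm_inv_apply_self, if_pos rfl, ← h2, perm_inv_apply_self]
    · have e1 : sig S ρ' x = ρ'.σ x := by unfold sig; rw [if_neg h1, if_neg h2]
      rw [e1]
      unfold tau
      rw [perm_inv_apply_self, if_neg hx1, if_neg hx2]

private lemma sig_tau (x : G'.D) (hx1 : x ≠ E1 S) (hx2 : x ≠ E2 S) :
    sig S ρ' (tau S ρ' x) = x := by
  by_cases h1 : ρ'.σ⁻¹ x = E1 S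
  · have e1 : tau S ρ' x = ρ'.σ⁻¹ (E2 S) := by unfold tau; rw [if_pos h1]
    rw [e1]
    unfold sig
    rw [perm_apply_inv_self, if_neg (fun h => E1_ne_E2 S h.symm), if_pos rfl, ← h1,
      perm_apply_inv_self]
  · by_cases h2 : ρ'.σ⁻¹ x = E2 S
    · have e1 : tau S ρ' x = ρ'.σ⁻¹ (E1 S) := by unfold tau; rw [if_neg h1, if_pos h2]
      rw [e1]
      unfold sig
      rw [perm_apply_inv_self, if_pos rfl, ← h2, perm_apply_inv_self]
    · have e1 : tau S ρ' x = ρ'.σ⁻¹ x := by unfold tau; rw [if_neg h1, if_neg h2]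
      rw [e1]
      unfold sig
      rw [perm_apply_inv_self, if_neg hx1, if_neg hx2]

private def ii (d : G.D) : G'.D := (S.fD d).1

private lemma ii_ne1 (d : G.D) : ii S d ≠ E1 S := (S.fD d).2.1
private lemma ii_ne2 (d : G.D) : ii S d ≠ E2 S := (S.fD d).2.2

private lemma ii_inj {d d' : G.D} (h : ii S d = ii S d') : d = d' :=
  S.fD.injective (Subtype.ext h)

private lemma ii_dinv (d : G.D) : ii S (G.dinv d) = G'.dinv (ii S d) := S.inv_compat d

private lemma ii_vert (d : G.D) : S.fV (G'.dvert (ii S d)) = G.dvert d := S.vert_compat d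

private def sigSub (h₁ : 3 ≤ G'.degree v₁) (h₂ : 3 ≤ G'.degree v₂) :
    Equiv.Perm {x : G'.D // x ≠ S.newDart ∧ x ≠ G'.dinv S.newDart} where
  toFun x := ⟨sig S ρ' x.1, (sig_ne S ρ' h₁ h₂ x.1).1, (sig_ne S ρ' h₁ h₂ x.1).2⟩
  invFun x := ⟨tau S ρ' x.1, (tau_ne S ρ' h₁ h₂ x.1).1, (tau_ne S ρ' h₁ h₂ x.1).2⟩
  left_inv x := Subtype.ext (tau_sig S ρ' x.1 x.2.1 x.2.2)
  right_inv x := Subtype.ext (sig_tau S ρ' x.1 x.2.1 x.2.2)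

private def sigG (h₁ : 3 ≤ G'.degree v₁) (h₂ : 3 ≤ G'.degree v₂) : Equiv.Perm G.D :=
  (S.fD.trans (sigSub S ρ' h₁ h₂)).trans S.fD.symm

private lemma ii_sigG (h₁ : 3 ≤ G'.degree v₁) (h₂ : 3 ≤ G'.degree v₂) (d : G.D) :
    ii S (sigG S ρ' h₁ h₂ d) = sig S ρ' (ii S d) := by
  show (S.fD (S.fD.symm (sigSub S ρ' h₁ h₂ (S.fD d)))).1 = _
  rw [Equiv.apply_symm_apply]
  rfl

private lemma fV_dvert_sig (x : G'.D) :
    S.fV (G'.dvert (sig S ρ' x)) = S.fV (G'.dvert x) := by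
  unfold sig
  split_ifs with hp1 hp2
  · have hl : G'.dvert (ρ'.σ (E2 S)) = v₂ := by rw [ρ'.vert_eq, dvert_E2]
    have hr : G'.dvert x = v₁ := by rw [← ρ'.vert_eq x, hp1, dvert_E1]
    rw [hl, hr, S.hv₁, S.hv₂]
  · have hl : G'.dvert (ρ'.σ (E1 S)) = v₁ := by rw [ρ'.vert_eq, dvert_E1]
    have hr : G'.dvert x = v₂ := by rw [← ρ'.vert_eq x, hp2, dvert_E2]
    rw [hl, hr, S.hv₁, S.hv₂]
  · rw [ρ'.vert_eq]

private lemma sigG_vert (h₁ : 3 ≤ G'.degree v₁) (h₂ : 3 ≤ G'.degree v₂) (d : G.D) :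
    G.dvert (sigG S ρ' h₁ h₂ d) = G.dvert d := by
  rw [← ii_vert S (sigG S ρ' h₁ h₂ d), ← ii_vert S d, ii_sigG, fV_dvert_sig]

private lemma ii_sigG_pow (h₁ : 3 ≤ G'.degree v₁) (h₂ : 3 ≤ G'.degree v₂) (k : ℕ) (d : G.D) :
    ii S ((sigG S ρ' h₁ h₂ ^ k) d) = (sig S ρ')^[k] (ii S d) := by
  induction k generalizing d with
  | zero => rfl
  | succ k ih =>
    rw [pow_succ, Equiv.Perm.mul_apply, Function.iterate_succ_apply, ← ii_sigG S ρ' h₁ h₂ d]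
    exact ih _

private lemma reachA (x : G'.D) (hx1 : x ≠ E1 S) (hxv : G'.dvert x = v₁) :
    ∃ m, (sig S ρ')^[m] x = ρ'.σ (E2 S) := by
  classical
  have hex : ∃ k, (ρ'.σ ^ k) x = E1 S := ρ'.orbit x (E1 S) (by rw [hxv, dvert_E1])
  set k := Nat.find hex with hkdef
  have hk : (ρ'.σ ^ k) x = E1 S := Nat.find_spec hex
  have hkpos : 0 < k := by
    rcases Nat.eq_zero_or_pos k with h | h
    · exfalso; apply hx1; rw [← hk, h, pow_zero, Equiv.Perm.one_apply]
    · exact h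
  have hiter : ∀ j, j ≤ k - 1 → (sig S ρ')^[j] x = (ρ'.σ ^ j) x := by
    intro j hj
    induction j with
    | zero => rfl
    | succ j ih =>
      rw [Function.iterate_succ_apply', ih (by omega)]
      have hsy : ρ'.σ ((ρ'.σ ^ j) x) = (ρ'.σ ^ (j + 1)) x := by
        rw [pow_succ', Equiv.Perm.mul_apply]
      have hne1 : (ρ'.σ ^ (j + 1)) x ≠ E1 S := fun h =>
        Nat.find_min hex (show j + 1 < k by omega) h
      have hne2 : (ρ'.σ ^ (j + 1)) x ≠ E2 S := by
        intro h
        have hd := dvert_pow ρ' (j + 1) x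
        rw [h, dvert_E2, hxv] at hd
        exact S.ne12 hd.symm
      unfold sig
      rw [hsy, if_neg hne1, if_neg hne2]
  refine ⟨k, ?_⟩
  have hk1 : k = (k - 1) + 1 := by omega
  rw [hk1, Function.iterate_succ_apply', hiter (k - 1) le_rfl]
  have hsy : ρ'.σ ((ρ'.σ ^ (k - 1)) x) = E1 S := by
    rw [← Equiv.Perm.mul_apply, ← pow_succ', show k - 1 + 1 = k from by omega, hk]
  unfold sig
  rw [hsy, if_pos rfl]

private lemma reachB (x : G'.D) (hx2 : x ≠ E2 S) (hxv : G'.dvert x = v₂) :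
    ∃ m, (sig S ρ')^[m] x = ρ'.σ (E1 S) := by
  classical
  have hex : ∃ k, (ρ'.σ ^ k) x = E2 S := ρ'.orbit x (E2 S) (by rw [hxv, dvert_E2])
  set k := Nat.find hex with hkdef
  have hk : (ρ'.σ ^ k) x = E2 S := Nat.find_spec hex
  have hkpos : 0 < k := by
    rcases Nat.eq_zero_or_pos k with h | h
    · exfalso; apply hx2; rw [← hk, h, pow_zero, Equiv.Perm.one_apply]
    · exact h
  have hiter : ∀ j, j ≤ k - 1 → (sig S ρ')^[j] x = (ρ'.σ ^ j) x := by
    intro j hj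
    induction j with
    | zero => rfl
    | succ j ih =>
      rw [Function.iterate_succ_apply', ih (by omega)]
      have hsy : ρ'.σ ((ρ'.σ ^ j) x) = (ρ'.σ ^ (j + 1)) x := by
        rw [pow_succ', Equiv.Perm.mul_apply]
      have hne2 : (ρ'.σ ^ (j + 1)) x ≠ E2 S := fun h =>
        Nat.find_min hex (show j + 1 < k by omega) h
      have hne1 : (ρ'.σ ^ (j + 1)) x ≠ E1 S := by
        intro h
        have hd := dvert_pow ρ' (j + 1) x
        rw [h, dvert_E1, hxv] at hd
        exact S.ne12 hd
      unfold sig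
      rw [hsy, if_neg hne1, if_neg hne2]
  refine ⟨k, ?_⟩
  have hk1 : k = (k - 1) + 1 := by omega
  rw [hk1, Function.iterate_succ_apply', hiter (k - 1) le_rfl]
  have hsy : ρ'.σ ((ρ'.σ ^ (k - 1)) x) = E2 S := by
    rw [← Equiv.Perm.mul_apply, ← pow_succ', show k - 1 + 1 = k from by omega, hk]
  unfold sig
  rw [hsy, if_neg (fun h => E1_ne_E2 S h.symm), if_pos rfl]

private lemma sub_pow (h₁ : 3 ≤ G'.degree v₁) (h₂ : 3 ≤ G'.degree v₂) (m : ℕ)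
    (x : {x : G'.D // x ≠ S.newDart ∧ x ≠ G'.dinv S.newDart}) :
    ((sigSub S ρ' h₁ h₂ ^ m) x).1 = (sig S ρ')^[m] x.1 := by
  induction m generalizing x with
  | zero => rfl
  | succ m ih =>
    rw [pow_succ, Equiv.Perm.mul_apply, Function.iterate_succ_apply]
    exact ih _

private lemma symm_reach (h₁ : 3 ≤ G'.degree v₁) (h₂ : 3 ≤ G'.degree v₂) (x z : G'.D)
    (hx1 : x ≠ E1 S) (hx2 : x ≠ E2 S) (m : ℕ) (h : (sig S ρ')^[m] x = z) :
    ∃ m', (sig S ρ')^[m'] z = x := by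
  classical
  set p := sigSub S ρ' h₁ h₂ with hp
  set N := Fintype.card (Equiv.Perm {x : G'.D // x ≠ S.newDart ∧ x ≠ G'.dinv S.newDart}) with hN
  have hN1 : 1 ≤ N := Fintype.card_pos
  refine ⟨N * m - m, ?_⟩
  have hx' : ((p ^ m) ⟨x, hx1, hx2⟩ : {x : G'.D // x ≠ S.newDart ∧ x ≠ G'.dinv S.newDart}).1 = z := by
    rw [sub_pow]; exact h
  have key : (p ^ (N * m - m)) ((p ^ m) ⟨x, hx1, hx2⟩) = ⟨x, hx1, hx2⟩ := by
    rw [← Equiv.Perm.mul_apply, ← pow_add]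
    have h2 : N * m - m + m = N * m := by
      have := Nat.mul_le_mul_right m hN1
      omega
    rw [h2, pow_mul, pow_card_eq_one, one_pow, Equiv.Perm.one_apply]
  have hkey := congrArg Subtype.val key
  rw [sub_pow, hx'] at hkey
  exact hkey

private lemma reach_toE1 (h₁ : 3 ≤ G'.degree v₁) (h₂ : 3 ≤ G'.degree v₂) (y : G'.D)
    (hy1 : y ≠ E1 S) (hy2 : y ≠ E2 S) (hv : G'.dvert y = v₁ ∨ G'.dvert y = v₂) :
    ∃ m, (sig S ρ')^[m] y = ρ'.σ (E1 S) := by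
  rcases hv with hv | hv
  · obtain ⟨m1, hm1⟩ := reachA S ρ' y hy1 hv
    obtain ⟨m2, hm2⟩ := reachB S ρ' (ρ'.σ (E2 S)) (sE2_ne S ρ' h₂) (by rw [ρ'.vert_eq, dvert_E2])
    exact ⟨m2 + m1, by rw [Function.iterate_add_apply, hm1, hm2]⟩
  · exact reachB S ρ' y hy2 hv

private lemma reach_all (h₁ : 3 ≤ G'.degree v₁) (h₂ : 3 ≤ G'.degree v₂) (x z : G'.D)
    (hx1 : x ≠ E1 S) (hx2 : x ≠ E2 S) (hz1 : z ≠ E1 S) (hz2 : z ≠ E2 S)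
    (hxv : G'.dvert x = v₁ ∨ G'.dvert x = v₂) (hzv : G'.dvert z = v₁ ∨ G'.dvert z = v₂) :
    ∃ m, (sig S ρ')^[m] x = z := by
  obtain ⟨m1, hm1⟩ := reach_toE1 S ρ' h₁ h₂ x hx1 hx2 hxv
  obtain ⟨m2, hm2⟩ := reach_toE1 S ρ' h₁ h₂ z hz1 hz2 hzv
  obtain ⟨m3, hm3⟩ := symm_reach S ρ' h₁ h₂ z (ρ'.σ (E1 S)) hz1 hz2 m2 hm2
  exact ⟨m3 + m1, by rw [Function.iterate_add_apply, hm1, hm3]⟩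

private def rotG (h₁ : 3 ≤ G'.degree v₁) (h₂ : 3 ≤ G'.degree v₂) : G.RotationSystem where
  σ := sigG S ρ' h₁ h₂
  vert_eq := sigG_vert S ρ' h₁ h₂
  orbit := by
    intro d d' h
    by_cases hfv : G.dvert d = v
    · have hx : G'.dvert (ii S d) = v₁ ∨ G'.dvert (ii S d) = v₂ :=
        S.fiber _ (by rw [ii_vert]; exact hfv)
      have hz : G'.dvert (ii S d') = v₁ ∨ G'.dvert (ii S d') = v₂ :=
        S.fiber _ (by rw [ii_vert]; rw [← h]; exact hfv)
      obtain ⟨m, hm⟩ := reach_all S ρ' h₁ h₂ (ii S d) (ii S d') (ii_ne1 S d) (ii_ne2 S d)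
        (ii_ne1 S d') (ii_ne2 S d') hx hz
      refine ⟨m, ii_inj S ?_⟩
      rw [ii_sigG_pow S ρ' h₁ h₂, hm]
    · have hw : G'.dvert (ii S d) = G'.dvert (ii S d') := by
        rcases S.inj (G'.dvert (ii S d)) (G'.dvert (ii S d')) (by rw [ii_vert, ii_vert]; exact h) with hbad | he
        · exfalso; apply hfv; rw [← ii_vert S d]; exact hbad
        · exact he
      obtain ⟨k, hk⟩ := ρ'.orbit _ _ hw
      refine ⟨k, ii_inj S ?_⟩
      rw [ii_sigG_pow S ρ' h₁ h₂]
      have hnotv : S.fV (G'.dvert (ii S d)) ≠ v := by rw [ii_vert]; exact hfv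
      have hiter : ∀ j, (sig S ρ')^[j] (ii S d) = (ρ'.σ ^ j) (ii S d) := by
        intro j
        induction j with
        | zero => rfl
        | succ j ih =>
          rw [Function.iterate_succ_apply', ih]
          have hsy : ρ'.σ ((ρ'.σ ^ j) (ii S d)) = (ρ'.σ ^ (j + 1)) (ii S d) := by
            rw [pow_succ', Equiv.Perm.mul_apply]
          have hv1 : (ρ'.σ ^ (j + 1)) (ii S d) ≠ E1 S := by
            intro hE
            have hd := dvert_pow ρ' (j + 1) (ii S d)
            rw [hE, dvert_E1] at hd
            apply hnotv
            rw [← hd, S.hv₁]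
          have hv2 : (ρ'.σ ^ (j + 1)) (ii S d) ≠ E2 S := by
            intro hE
            have hd := dvert_pow ρ' (j + 1) (ii S d)
            rw [hE, dvert_E2] at hd
            apply hnotv
            rw [← hd, S.hv₂]
          unfold sig
          rw [hsy, if_neg hv1, if_neg hv2]
      rw [hiter k, hk]

private def phi' (x : G'.D) : G'.D := ρ'.σ (G'.dinv x)

private def psi (x : G'.D) : G'.D := sig S ρ' (G'.dinv x)

private lemma ii_phiG (h₁ : 3 ≤ G'.degree v₁) (h₂ : 3 ≤ G'.degree v₂) (d : G.D) :
    ii S (sigG S ρ' h₁ h₂ (G.dinv d)) = psi S ρ' (ii S d) := by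
  rw [ii_sigG, ii_dinv]; rfl

private lemma psi_eq1 (x : G'.D) (h : phi' ρ' x = E1 S) :
    psi S ρ' x = phi' ρ' (phi' ρ' x) := by
  unfold phi' at h ⊢
  unfold psi sig
  rw [h, if_pos rfl]
  rfl

private lemma psi_eq2 (x : G'.D) (h : phi' ρ' x = E2 S) :
    psi S ρ' x = phi' ρ' (phi' ρ' x) := by
  unfold phi' at h ⊢
  unfold psi sig
  rw [h, if_neg (fun hc => E1_ne_E2 S hc.symm), if_pos rfl, dinv_E2]

private lemma psi_eq3 (x : G'.D) (h1 : phi' ρ' x ≠ E1 S) (h2 : phi' ρ' x ≠ E2 S) :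
    psi S ρ' x = phi' ρ' x := by
  unfold phi' at h1 h2 ⊢
  unfold psi sig
  rw [if_neg h1, if_neg h2]

private lemma first_return (h₁ : 3 ≤ G'.degree v₁) (h₂ : 3 ≤ G'.degree v₂) :
    ∀ k, ∀ x : G'.D, (phi' ρ')^[k] x ≠ E1 S → (phi' ρ')^[k] x ≠ E2 S →
      ∃ m, (psi S ρ')^[m] x = (phi' ρ')^[k] x := by
  intro k
  induction k using Nat.strong_induction_on with
  | _ k ih =>
    intro x hk1 hk2
    rcases k with _ | k
    · exact ⟨0, rfl⟩
    by_cases hb : phi' ρ' x = E1 S ∨ phi' ρ' x = E2 S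
    · rcases k with _ | k'
      · exfalso
        rcases hb with hb | hb
        · exact hk1 (by rw [Function.iterate_one]; exact hb)
        · exact hk2 (by rw [Function.iterate_one]; exact hb)
      · have e : k' + 1 + 1 = k' + 2 := by omega
        rw [e] at hk1 hk2 ⊢
        have hps : psi S ρ' x = (phi' ρ')^[2] x := by
          rcases hb with hb | hb
          · rw [psi_eq1 S ρ' x hb]; rfl
          · rw [psi_eq2 S ρ' x hb]; rfl
        have h2k : (phi' ρ')^[k' + 2] x = (phi' ρ')^[k'] ((phi' ρ')^[2] x) :=
          Function.iterate_add_apply _ k' 2 x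
        obtain ⟨m, hm⟩ := ih k' (by omega) ((phi' ρ')^[2] x)
          (by rw [← h2k]; exact hk1) (by rw [← h2k]; exact hk2)
        refine ⟨m + 1, ?_⟩
        rw [Function.iterate_succ_apply, hps, hm, ← h2k]
    · push_neg at hb
      have hps : psi S ρ' x = phi' ρ' x := psi_eq3 S ρ' x hb.1 hb.2
      have h1k : (phi' ρ')^[k + 1] x = (phi' ρ')^[k] (phi' ρ' x) :=
        Function.iterate_succ_apply _ k x
      obtain ⟨m, hm⟩ := ih k (by omega) (phi' ρ' x)
        (by rw [← h1k]; exact hk1) (by rw [← h1k]; exact hk2)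
      refine ⟨m + 1, ?_⟩
      rw [Function.iterate_succ_apply, hps, hm, ← h1k]

private lemma mk_step {α : Type} (f : α → α) (a : α) :
    Quot.mk (fun x y => f x = y) a = Quot.mk _ (f a) :=
  Quot.sound rfl

private lemma mk_iter {α : Type} (f : α → α) (m : ℕ) (a : α) :
    Quot.mk (fun x y => f x = y) a = Quot.mk _ (f^[m] a) := by
  induction m with
  | zero => rfl
  | succ m ih =>
    exact ih.trans (Quot.sound ((Function.iterate_succ_apply' f m a).symm))

private lemma orbit_card_le {α β : Type} [Finite β] (f : α → α) (g : β → β) (h : α → β)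
    (h1 : ∀ a, Quot.mk (fun x y : β => g x = y) (h (f a)) = Quot.mk _ (h a))
    (h2 : ∀ a a', Quot.mk (fun x y : β => g x = y) (h a) = Quot.mk _ (h a') →
      Quot.mk (fun x y : α => f x = y) a = Quot.mk _ a') :
    orbitCount f ≤ orbitCount g := by
  unfold orbitCount
  have hfin : Finite (Quot fun x y : β => g x = y) :=
    Finite.of_surjective (Quot.mk _) (fun q => q.exists_rep)
  refine Nat.card_le_card_of_injective
    (Quot.lift (fun a => Quot.mk (fun x y : β => g x = y) (h a))
      (fun a b hab => by rw [← hab]; exact (h1 a).symm)) ?_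
  intro q q'
  induction q using Quot.ind with
  | _ a =>
    induction q' using Quot.ind with
    | _ a' => exact fun hh => h2 a a' hh

private lemma ii_fG_iter (h₁ : 3 ≤ G'.degree v₁) (h₂ : 3 ≤ G'.degree v₂) (m : ℕ) (d : G.D) :
    ii S ((fun d => sigG S ρ' h₁ h₂ (G.dinv d))^[m] d) = (psi S ρ')^[m] (ii S d) := by
  induction m generalizing d with
  | zero => rfl
  | succ m ih =>
    rw [Function.iterate_succ_apply, Function.iterate_succ_apply,
      ih (sigG S ρ' h₁ h₂ (G.dinv d)), ii_phiG]

private lemma face_le (h₁ : 3 ≤ G'.degree v₁) (h₂ : 3 ≤ G'.degree v₂) :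
    G.faceCount (rotG S ρ' h₁ h₂) ≤ G'.faceCount ρ' := by
  classical
  have hg : (fun d => ρ'.σ (G'.dinv d)) = phi' ρ' := rfl
  have hf : (fun d => (rotG S ρ' h₁ h₂).σ (G.dinv d)) = fun d => sigG S ρ' h₁ h₂ (G.dinv d) := rfl
  unfold faceCount
  rw [hg, hf]
  set π' : Equiv.Perm G'.D :=
    (Function.Involutive.toPerm G'.dinv G'.dinv_invol).trans ρ'.σ with hπ'
  refine orbit_card_le _ _ (ii S) ?_ ?_
  · intro a
    rw [ii_phiG S ρ' h₁ h₂ a]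
    by_cases hb1 : phi' ρ' (ii S a) = E1 S
    · rw [psi_eq1 S ρ' _ hb1]
      exact ((mk_step (phi' ρ') _).trans (mk_step (phi' ρ') _)).symm
    · by_cases hb2 : phi' ρ' (ii S a) = E2 S
      · rw [psi_eq2 S ρ' _ hb2]
        exact ((mk_step (phi' ρ') _).trans (mk_step (phi' ρ') _)).symm
      · rw [psi_eq3 S ρ' _ hb1 hb2]
        exact (mk_step (phi' ρ') _).symm
  · intro a a' hq
    rw [Quot.eq] at hq
    have hq' : Relation.EqvGen (fun x y => π' x = y) (ii S a) (ii S a') := hq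
    obtain ⟨k, hk⟩ := eqvGen_perm π' hq'
    have hk' : (phi' ρ')^[k] (ii S a) = ii S a' := by
      show (⇑π')^[k] (ii S a) = ii S a'
      rw [Equiv.Perm.iterate_eq_pow]
      exact hk
    obtain ⟨m, hm⟩ := first_return S ρ' h₁ h₂ k (ii S a)
      (by rw [hk']; exact ii_ne1 S a') (by rw [hk']; exact ii_ne2 S a')
    have : ii S ((fun d => sigG S ρ' h₁ h₂ (G.dinv d))^[m] a) = ii S a' := by
      rw [ii_fG_iter, hm, hk']
    rw [mk_iter (fun d => sigG S ρ' h₁ h₂ (G.dinv d)) m a, ii_inj S this]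

private lemma genus_le (h₁ : 3 ≤ G'.degree v₁) (h₂ : 3 ≤ G'.degree v₂) :
    G'.embGenus ρ' ≤ G.embGenus (rotG S ρ' h₁ h₂) := by
  have hE : G'.edgeCount = G.edgeCount + 1 := by
    have := cardD S
    unfold edgeCount
    omega
  have hV : G'.vertexCount = G.vertexCount + 1 := by
    have := cardV S
    unfold vertexCount
    omega
  have hF : G.faceCount (rotG S ρ' h₁ h₂) ≤ G'.faceCount ρ' := face_le S ρ' h₁ h₂
  unfold embGenus
  apply Int.toNat_le_toNat
  apply Int.ediv_le_ediv (by norm_num)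
  rw [hE, hV]
  push_cast
  omega

end Data
end Split
end Multigraph
/-- Splitting a vertex `v` of degree `n ≥ 4` of a connected graph `G` with minimum
degree at least three into two vertices each of degree at least three does not increase
the maximum genus: `γ_M(G') ≤ γ_M(G)`. -/
theorem maxGenus_split_le (G G' : Multigraph) (hG : G.Connected)
    (hmin : ∀ u : G.V, 3 ≤ G.degree u)
    (v : G.V) (n : ℕ) (hdeg : G.degree v = n) (hn : 4 ≤ n)
    (v₁ v₂ : G'.V) (hsplit : Nonempty (Multigraph.SplitData G G' v v₁ v₂))
    (h₁ : 3 ≤ G'.degree v₁) (h₂ : 3 ≤ G'.degree v₂) :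
    G'.maxGenus ≤ G.maxGenus := by
  obtain ⟨S⟩ := hsplit
  have hbdd : BddAbove {k : ℕ | ∃ ρ : G.RotationSystem, G.embGenus ρ = k} := by
    refine ⟨2 + G.edgeCount, ?_⟩
    rintro k ⟨ρ, rfl⟩
    unfold Multigraph.embGenus
    rw [Int.toNat_le]
    push_cast
    omega
  unfold Multigraph.maxGenus
  by_cases hne : {k : ℕ | ∃ ρ : G'.RotationSystem, G'.embGenus ρ = k}.Nonempty
  · refine csSup_le hne ?_
    rintro k ⟨ρ', rfl⟩
    exact (Multigraph.genus_le S ρ' h₁ h₂).trans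
      (le_csSup hbdd ⟨Multigraph.rotG S ρ' h₁ h₂, rfl⟩)
  · rw [Set.not_nonempty_iff_eq_empty.mp hne, csSup_empty]
    exact bot_le
end

section
/- Let G be a connected graph and let v be an α-vertex of G, i.e., a vertex incident with a loop and with exactly one other (non-loop) edge. Then γ_M(G − v) = γ_M(G). -/
namespace Multigraph

variable {G : Multigraph}

lemma vert_pow (ρ : G.RotationSystem) (k : ℕ) (d : G.D) :
    G.dvert ((ρ.σ ^ k) d) = G.dvert d := by
  induction k with
  | zero => rfl
  | succ n ih => rw [pow_succ', Equiv.Perm.mul_apply, ρ.vert_eq, ih]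

lemma natcard_quot_succ {α β : Type} [Finite β] (r : α → α → Prop) (r' : β → β → Prop)
    (e : Quot r ≃ Option (Quot r')) : Nat.card (Quot r) = Nat.card (Quot r') + 1 := by
  rw [Nat.card_congr e, Nat.card_congr (Equiv.optionEquivSumPUnit.{0,0} _), Nat.card_sum]
  simp

lemma dinv_inj : Function.Injective G.dinv := by
  intro a b h
  rw [← G.dinv_invol a, h, G.dinv_invol]

end Multigraph


namespace Multigraph

lemma quot_option {α : Type} [DecidableEq α] [Finite α] (Pr : α → Prop) [DecidablePred Pr]
    (φ : α → α) (ψ : {x // Pr x} → {x // Pr x}) (p q s t b : α)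
    (hclass : ∀ x, ¬ Pr x ↔ (x = p ∨ x = q ∨ x = s ∨ x = t))
    (hqp : q ≠ p) (hsp : s ≠ p) (htp : t ≠ p)
    (hfp : φ p = p) (hft : φ t = q) (hfq : φ q = s)
    (hPb : Pr b) (hfb : φ b = t) (hPs : Pr (φ s))
    (hinj : Function.Injective φ)
    (hψ : ∀ x, (ψ x).1 = if φ x.1 = t then φ s else φ x.1) :
    Nat.card (Quot fun a b' => φ a = b') = Nat.card (Quot fun a b' => ψ a = b') + 1 := by
  have hnp : ¬ Pr p := (hclass p).mpr (Or.inl rfl)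
  have hnq : ¬ Pr q := (hclass q).mpr (Or.inr (Or.inl rfl))
  have hns : ¬ Pr s := (hclass s).mpr (Or.inr (Or.inr (Or.inl rfl)))
  have hnt : ¬ Pr t := (hclass t).mpr (Or.inr (Or.inr (Or.inr rfl)))
  have ub : ∀ x, φ x = t → x = b := fun x h => hinj (h.trans hfb.symm)
  have ut : ∀ x, φ x = q → x = t := fun x h => hinj (h.trans hft.symm)
  have uq : ∀ x, φ x = s → x = q := fun x h => hinj (h.trans hfq.symm)
  have up : ∀ x, φ x = p → x = p := fun x h => hinj (h.trans hfp.symm)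
  have hPφ : ∀ x, Pr x → x ≠ b → Pr (φ x) := by
    intro x hx hxb
    by_contra h
    rcases (hclass _).mp h with h' | h' | h' | h'
    · exact hnp ((up x h') ▸ hx)
    · exact hnt ((ut x h') ▸ hx)
    · exact hnq ((uq x h') ▸ hx)
    · exact hxb (ub x h')
  set r : α → α → Prop := fun a b' => φ a = b' with hr
  set r' : {x // Pr x} → {x // Pr x} → Prop := fun a b' => ψ a = b' with hr'
  refine natcard_quot_succ r r' ?_
  have wd : ∀ a b₀ : α, r a b₀ →
      (if h : Pr a then some (Quot.mk r' ⟨a, h⟩) else if a = p then none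
        else some (Quot.mk r' ⟨φ s, hPs⟩)) =
      (if h : Pr b₀ then some (Quot.mk r' ⟨b₀, h⟩) else if b₀ = p then none
        else some (Quot.mk r' ⟨φ s, hPs⟩)) := by
    intro a b₀ hab
    have hab' : φ a = b₀ := hab
    subst hab'
    by_cases hp : Pr a
    · by_cases hb : a = b
      · subst hb
        rw [dif_pos hp, hfb, dif_neg hnt, if_neg htp]
        refine congrArg some (Quot.sound ?_)
        show ψ ⟨a, hp⟩ = ⟨φ s, hPs⟩
        refine Subtype.ext ?_
        rw [hψ, hfb]
        simp
      · have hPφa := hPφ a hp hb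
        rw [dif_pos hp, dif_pos hPφa]
        refine congrArg some (Quot.sound ?_)
        show ψ ⟨a, hp⟩ = ⟨φ a, hPφa⟩
        refine Subtype.ext ?_
        rw [hψ]
        exact if_neg (fun hh => hb (ub a hh))
    · rcases (hclass a).mp hp with h' | h' | h' | h' <;> subst h'
      · rw [hfp]
      · rw [hfq, dif_neg hnq, if_neg hqp, dif_neg hns, if_neg hsp]
      · rw [dif_neg hns, if_neg hsp, dif_pos hPs]
      · rw [hft, dif_neg hnt, if_neg htp, dif_neg hnq, if_neg hqp]
  have wd2 : ∀ x y : {x // Pr x}, r' x y → Quot.mk r x.1 = Quot.mk r y.1 := by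
    intro x y hxy
    have hxy' : ψ x = y := hxy
    subst hxy'
    by_cases hxb : x.1 = b
    · have h1 : (ψ x).1 = φ s := by rw [hψ, hxb, hfb, if_pos rfl]
      rw [h1, hxb]
      exact (Quot.sound (show r b t from hfb)).trans
        ((Quot.sound (show r t q from hft)).trans
          ((Quot.sound (show r q s from hfq)).trans (Quot.sound (show r s (φ s) from rfl))))
    · have h1 : (ψ x).1 = φ x.1 := by rw [hψ]; exact if_neg (fun hh => hxb (ub _ hh))
      rw [h1]
      exact Quot.sound (show r x.1 (φ x.1) from rfl)
  refine
    { toFun := Quot.lift (fun x => if h : Pr x then some (Quot.mk r' ⟨x, h⟩) else if x = p then none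
        else some (Quot.mk r' ⟨φ s, hPs⟩)) wd
      invFun := fun o => o.elim (Quot.mk r p) (Quot.lift (fun x => Quot.mk r x.1) wd2)
      left_inv := ?_
      right_inv := ?_ }
  · intro qt
    induction qt using Quot.ind with
    | _ x =>
      by_cases hp : Pr x
      · simp only [Quot.lift_mk, dif_pos hp]
        rfl
      · rcases (hclass x).mp hp with h' | h' | h' | h' <;> rw [h']
        · simp only [Quot.lift_mk, dif_neg hnp, if_pos rfl]
          rfl
        · simp only [Quot.lift_mk, dif_neg hnq, if_neg hqp]
          exact ((Quot.sound (show r q s from hfq)).trans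
            (Quot.sound (show r s (φ s) from rfl))).symm
        · simp only [Quot.lift_mk, dif_neg hns, if_neg hsp]
          exact (Quot.sound (show r s (φ s) from rfl)).symm
        · simp only [Quot.lift_mk, dif_neg hnt, if_neg htp]
          exact ((Quot.sound (show r t q from hft)).trans
            ((Quot.sound (show r q s from hfq)).trans
              (Quot.sound (show r s (φ s) from rfl)))).symm
  · intro o
    match o with
    | none =>
      show (if h : Pr p then some (Quot.mk r' ⟨p, h⟩) else if p = p then none
        else some (Quot.mk r' ⟨φ s, hPs⟩)) = none
      rw [dif_neg hnp, if_pos rfl]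
    | some qt =>
      induction qt using Quot.ind with
      | _ x =>
        show (if h : Pr x.1 then some (Quot.mk r' ⟨x.1, h⟩) else if x.1 = p then none
          else some (Quot.mk r' ⟨φ s, hPs⟩)) = some (Quot.mk r' x)
        rw [dif_pos x.2]

end Multigraph


namespace Multigraph

lemma face_step (G : Multigraph) (v : G.V) (d₁ d₂ d₃ e₃ c f : G.D)
    (hv1 : G.dvert d₁ = v) (hv2 : G.dvert d₂ = v) (hv3 : G.dvert d₃ = v)
    (hw : G.dvert e₃ ≠ v)
    (hinv1 : G.dinv d₁ = d₂) (hinv3 : G.dinv d₃ = e₃)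
    (hPclass : ∀ x : G.D, ¬(G.dvert x ≠ v ∧ G.dvert (G.dinv x) ≠ v) ↔
      (x = d₁ ∨ x = d₂ ∨ x = d₃ ∨ x = e₃))
    (hcf : (c = d₁ ∧ f = d₂) ∨ (c = d₂ ∧ f = d₁))
    (ρ : G.RotationSystem) (ρ' : (G.deleteVertex v).RotationSystem)
    (hσ3 : ρ.σ d₃ = c) (hσc : ρ.σ c = f) (hσf : ρ.σ f = d₃)
    (hσe : ρ.σ e₃ ≠ e₃)
    (hcompat : ∀ x : (G.deleteVertex v).D,
      (ρ'.σ x).1 = if ρ.σ x.1 = e₃ then ρ.σ e₃ else ρ.σ x.1) :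
    G.faceCount ρ = (G.deleteVertex v).faceCount ρ' + 1 := by
  have hvc : G.dvert c = v := by rcases hcf with ⟨rfl, rfl⟩ | ⟨rfl, rfl⟩ <;> assumption
  have hvf : G.dvert f = v := by rcases hcf with ⟨rfl, rfl⟩ | ⟨rfl, rfl⟩ <;> assumption
  have hinv2 : G.dinv d₂ = d₁ := by rw [← hinv1, G.dinv_invol]
  have hinve : G.dinv e₃ = d₃ := by rw [← hinv3, G.dinv_invol]
  have hinvc : G.dinv c = f := by
    rcases hcf with ⟨rfl, rfl⟩ | ⟨rfl, rfl⟩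
    · exact hinv1
    · exact hinv2
  have hinvf : G.dinv f = c := by
    rcases hcf with ⟨rfl, rfl⟩ | ⟨rfl, rfl⟩
    · exact hinv2
    · exact hinv1
  have h12 : d₁ ≠ d₂ := fun h => G.dinv_ne d₁ (hinv1.trans h.symm)
  have h31 : d₃ ≠ d₁ := fun h => hw (by rw [← hinv3, h, hinv1]; exact hv2)
  have h32 : d₃ ≠ d₂ := fun h => hw (by rw [← hinv3, h, hinv2]; exact hv1)
  have hce : c ≠ e₃ := fun h => hw (h ▸ hvc)
  have hfe : f ≠ e₃ := fun h => hw (h ▸ hvf)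
  have h3e : d₃ ≠ e₃ := fun h => hw (h ▸ hv3)
  have hcnef : c ≠ f := by
    rcases hcf with ⟨rfl, rfl⟩ | ⟨rfl, rfl⟩
    · exact h12
    · exact fun h => h12 h.symm
  have hd3f : d₃ ≠ f := by
    rcases hcf with ⟨rfl, rfl⟩ | ⟨rfl, rfl⟩
    · exact h32
    · exact h31
  have hclass' : ∀ x : G.D, ¬(G.dvert x ≠ v ∧ G.dvert (G.dinv x) ≠ v) ↔
      (x = f ∨ x = c ∨ x = d₃ ∨ x = e₃) := by
    intro x
    rw [hPclass x]
    rcases hcf with ⟨rfl, rfl⟩ | ⟨rfl, rfl⟩ <;> tauto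
  have Hf : ρ.σ (G.dinv f) = f := by rw [hinvf, hσc]
  have He : ρ.σ (G.dinv e₃) = c := by rw [hinve, hσ3]
  have Hc : ρ.σ (G.dinv c) = d₃ := by rw [hinvc, hσf]
  have H3 : ρ.σ (G.dinv d₃) = ρ.σ e₃ := by rw [hinv3]
  have Hb : ρ.σ (G.dinv (G.dinv (ρ.σ.symm e₃))) = e₃ := by
    rw [G.dinv_invol]
    exact ρ.σ.apply_symm_apply e₃
  have φinj : Function.Injective (fun d => ρ.σ (G.dinv d)) := by
    intro a a' h
    exact dinv_inj (ρ.σ.injective h)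
  have hPσe : G.dvert (ρ.σ e₃) ≠ v ∧ G.dvert (G.dinv (ρ.σ e₃)) ≠ v := by
    by_contra h
    rcases (hPclass _).mp h with h' | h' | h' | h'
    · exact hw (by rw [← ρ.vert_eq e₃, h']; exact hv1)
    · exact hw (by rw [← ρ.vert_eq e₃, h']; exact hv2)
    · exact hw (by rw [← ρ.vert_eq e₃, h']; exact hv3)
    · exact hσe h'
  have hPb : G.dvert (G.dinv (ρ.σ.symm e₃)) ≠ v ∧
      G.dvert (G.dinv (G.dinv (ρ.σ.symm e₃))) ≠ v := by
    by_contra h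
    rcases (hclass' _).mp h with h' | h' | h' | h'
    · rw [h'] at Hb; exact hfe (Hf.symm.trans Hb)
    · rw [h'] at Hb; exact h3e (Hc.symm.trans Hb)
    · rw [h'] at Hb; exact hσe (H3.symm.trans Hb)
    · rw [h'] at Hb; exact hce (He.symm.trans Hb)
  have hPs : G.dvert (ρ.σ (G.dinv d₃)) ≠ v ∧ G.dvert (G.dinv (ρ.σ (G.dinv d₃))) ≠ v := by
    rw [hinv3]
    exact hPσe
  unfold faceCount orbitCount
  refine quot_option (fun d => G.dvert d ≠ v ∧ G.dvert (G.dinv d) ≠ v)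
    (fun d => ρ.σ (G.dinv d)) (fun x => ρ'.σ ((G.deleteVertex v).dinv x))
    f c d₃ e₃ (G.dinv (ρ.σ.symm e₃)) hclass' hcnef hd3f (Ne.symm hfe)
    Hf He Hc hPb Hb hPs φinj ?_
  intro x
  have h := hcompat ((G.deleteVertex v).dinv x)
  show (ρ'.σ ((G.deleteVertex v).dinv x)).1 =
    if ρ.σ (G.dinv x.1) = e₃ then ρ.σ (G.dinv d₃) else ρ.σ (G.dinv x.1)
  rw [hinv3]
  exact h

end Multigraph


namespace Multigraph

lemma skip_pow (G : Multigraph) (v : G.V) (e₃ : G.D) (σG : Equiv.Perm G.D)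
    (σ' : Equiv.Perm (G.deleteVertex v).D)
    (hcompat : ∀ x : (G.deleteVertex v).D,
      (σ' x).1 = if σG x.1 = e₃ then σG e₃ else σG x.1)
    (hne : G.dvert (G.dinv e₃) = v) :
    ∀ k (x y : (G.deleteVertex v).D), (σG ^ k) x.1 = y.1 → ∃ m, (σ' ^ m) x = y := by
  intro k
  induction k using Nat.strong_induction_on with
  | _ k IH =>
    cases k with
    | zero =>
      intro x y h
      exact ⟨0, Subtype.ext h⟩
    | succ k =>
      intro x y h
      rw [pow_succ, Equiv.Perm.mul_apply] at h
      by_cases hz : σG x.1 = e₃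
      · cases k with
        | zero =>
          exfalso
          rw [pow_zero] at h
          exact y.2.2 (by rw [← h, hz]; exact hne)
        | succ k =>
          rw [hz, pow_succ, Equiv.Perm.mul_apply] at h
          have hx' : ((σ' x).1) = σG e₃ := by rw [hcompat x, if_pos hz]
          obtain ⟨m, hm⟩ := IH k (by omega) (σ' x) y (by rw [hx']; exact h)
          exact ⟨m + 1, by rw [pow_succ, Equiv.Perm.mul_apply]; exact hm⟩
      · have hx' : ((σ' x).1) = σG x.1 := by rw [hcompat x, if_neg hz]
        obtain ⟨m, hm⟩ := IH k (by omega) (σ' x) y (by rw [hx']; exact h)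
        exact ⟨m + 1, by rw [pow_succ, Equiv.Perm.mul_apply]; exact hm⟩

lemma unskip_pow (G : Multigraph) (v : G.V) (e₃ : G.D) (σG : Equiv.Perm G.D)
    (σ' : Equiv.Perm (G.deleteVertex v).D)
    (hcompat : ∀ x : (G.deleteVertex v).D,
      (σ' x).1 = if σG x.1 = e₃ then σG e₃ else σG x.1) :
    ∀ k (x y : (G.deleteVertex v).D), (σ' ^ k) x = y → ∃ m, (σG ^ m) x.1 = y.1 := by
  intro k
  induction k with
  | zero =>
    intro x y h
    rw [pow_zero] at h
    exact ⟨0, congrArg Subtype.val h⟩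
  | succ k IH =>
    intro x y h
    rw [pow_succ, Equiv.Perm.mul_apply] at h
    obtain ⟨m, hm⟩ := IH (σ' x) y h
    by_cases hz : σG x.1 = e₃
    · refine ⟨m + 2, ?_⟩
      have hh : (σ' x).1 = σG (σG x.1) := by rw [hcompat x, if_pos hz, hz]
      rw [pow_add, Equiv.Perm.mul_apply, pow_two, Equiv.Perm.mul_apply, ← hh]
      exact hm
    · refine ⟨m + 1, ?_⟩
      have hh : (σ' x).1 = σG x.1 := by rw [hcompat x, if_neg hz]
      rw [pow_succ, Equiv.Perm.mul_apply, ← hh]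
      exact hm

lemma sigma_fix (G : Multigraph) (ρ : G.RotationSystem) (d : G.D) (hd : ρ.σ d = d)
    (d' : G.D) (hvd : G.dvert d = G.dvert d') : d' = d := by
  have hk : ∀ k, (ρ.σ ^ k) d = d := by
    intro k
    induction k with
    | zero => rfl
    | succ n ih => rw [pow_succ, Equiv.Perm.mul_apply, hd]; exact ih
  obtain ⟨k, h⟩ := ρ.orbit d d' hvd
  rw [hk k] at h
  exact h.symm

lemma rot_at_v (G : Multigraph) (v : G.V) (d₁ d₂ d₃ : G.D) (ρ : G.RotationSystem)
    (hv1 : G.dvert d₁ = v) (hv2 : G.dvert d₂ = v) (hv3 : G.dvert d₃ = v)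
    (h12 : d₁ ≠ d₂) (h13 : d₁ ≠ d₃) (h23 : d₂ ≠ d₃)
    (hall3 : ∀ d, G.dvert d = v → d = d₁ ∨ d = d₂ ∨ d = d₃) :
    (ρ.σ d₁ = d₂ ∧ ρ.σ d₂ = d₃ ∧ ρ.σ d₃ = d₁) ∨
    (ρ.σ d₁ = d₃ ∧ ρ.σ d₃ = d₂ ∧ ρ.σ d₂ = d₁) := by
  have inj := ρ.σ.injective
  have m1 : ρ.σ d₁ = d₁ ∨ ρ.σ d₁ = d₂ ∨ ρ.σ d₁ = d₃ :=
    hall3 _ (by rw [ρ.vert_eq]; exact hv1)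
  rcases m1 with h1 | h1 | h1
  · exact absurd (sigma_fix G ρ d₁ h1 d₃ (hv1.trans hv3.symm)).symm h13
  · -- σ d₁ = d₂
    have m2 : ρ.σ d₂ = d₁ ∨ ρ.σ d₂ = d₂ ∨ ρ.σ d₂ = d₃ :=
      hall3 _ (by rw [ρ.vert_eq]; exact hv2)
    rcases m2 with h2 | h2 | h2
    · exfalso
      have conf : ∀ k, (ρ.σ ^ k) d₁ = d₁ ∨ (ρ.σ ^ k) d₁ = d₂ := by
        intro k
        induction k with
        | zero => exact Or.inl rfl
        | succ n ih =>
          rcases ih with h | h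
          · rw [pow_succ', Equiv.Perm.mul_apply, h, h1]; exact Or.inr rfl
          · rw [pow_succ', Equiv.Perm.mul_apply, h, h2]; exact Or.inl rfl
      obtain ⟨k, hk⟩ := ρ.orbit d₁ d₃ (hv1.trans hv3.symm)
      rcases conf k with h | h
      · exact h13 (h.symm.trans hk)
      · exact h23 (h.symm.trans hk)
    · exact absurd (inj (h2.trans h1.symm)) (fun hh => h12 hh.symm)
    · -- σ d₂ = d₃, derive σ d₃ = d₁
      have m3 : ρ.σ d₃ = d₁ ∨ ρ.σ d₃ = d₂ ∨ ρ.σ d₃ = d₃ :=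
        hall3 _ (by rw [ρ.vert_eq]; exact hv3)
      rcases m3 with h3 | h3 | h3
      · exact Or.inl ⟨h1, h2, h3⟩
      · exact absurd (inj (h3.trans h1.symm)) (fun hh => h13 hh.symm)
      · exact absurd (inj (h3.trans h2.symm)) (fun hh => h23 hh.symm)
  · -- σ d₁ = d₃
    have m3 : ρ.σ d₃ = d₁ ∨ ρ.σ d₃ = d₂ ∨ ρ.σ d₃ = d₃ :=
      hall3 _ (by rw [ρ.vert_eq]; exact hv3)
    rcases m3 with h3 | h3 | h3
    · exfalso
      have conf : ∀ k, (ρ.σ ^ k) d₁ = d₁ ∨ (ρ.σ ^ k) d₁ = d₃ := by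
        intro k
        induction k with
        | zero => exact Or.inl rfl
        | succ n ih =>
          rcases ih with h | h
          · rw [pow_succ', Equiv.Perm.mul_apply, h, h1]; exact Or.inr rfl
          · rw [pow_succ', Equiv.Perm.mul_apply, h, h3]; exact Or.inl rfl
      obtain ⟨k, hk⟩ := ρ.orbit d₁ d₂ (hv1.trans hv2.symm)
      rcases conf k with h | h
      · exact h12 (h.symm.trans hk)
      · exact h23 (h.symm.trans hk).symm
    · -- σ d₃ = d₂, derive σ d₂ = d₁
      have m2 : ρ.σ d₂ = d₁ ∨ ρ.σ d₂ = d₂ ∨ ρ.σ d₂ = d₃ :=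
        hall3 _ (by rw [ρ.vert_eq]; exact hv2)
      rcases m2 with h2 | h2 | h2
      · exact Or.inr ⟨h1, h3, h2⟩
      · exact absurd (inj (h2.trans h3.symm)) h23
      · exact absurd (inj (h2.trans h1.symm)) (fun hh => h12 hh.symm)
    · exact absurd (inj (h3.trans h1.symm)) (fun hh => h13 hh.symm)

end Multigraph


namespace Multigraph

lemma exists_rs_delete (G : Multigraph) (v : G.V) (d₁ d₂ d₃ e₃ : G.D)
    (hv1 : G.dvert d₁ = v) (hv2 : G.dvert d₂ = v) (hv3 : G.dvert d₃ = v)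
    (hw : G.dvert e₃ ≠ v)
    (hinv1 : G.dinv d₁ = d₂) (hinv3 : G.dinv d₃ = e₃)
    (hPclass : ∀ x : G.D, ¬(G.dvert x ≠ v ∧ G.dvert (G.dinv x) ≠ v) ↔
      (x = d₁ ∨ x = d₂ ∨ x = d₃ ∨ x = e₃))
    (ρ : G.RotationSystem) (hσe : ρ.σ e₃ ≠ e₃) :
    ∃ ρ' : (G.deleteVertex v).RotationSystem,
      G.faceCount ρ = (G.deleteVertex v).faceCount ρ' + 1 := by
  have hinve : G.dinv e₃ = d₃ := by rw [← hinv3, G.dinv_invol]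
  have hinv2 : G.dinv d₂ = d₁ := by rw [← hinv1, G.dinv_invol]
  have h12 : d₁ ≠ d₂ := fun h => G.dinv_ne d₁ (hinv1.trans h.symm)
  have h13 : d₁ ≠ d₃ := fun h => hw (by rw [← hinv3, ← h, hinv1]; exact hv2)
  have h23 : d₂ ≠ d₃ := fun h => hw (by rw [← hinv3, ← h, hinv2]; exact hv1)
  have hall3 : ∀ d, G.dvert d = v → d = d₁ ∨ d = d₂ ∨ d = d₃ := by
    intro d hd
    have : ¬(G.dvert d ≠ v ∧ G.dvert (G.dinv d) ≠ v) := fun h => h.1 hd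
    rcases (hPclass d).mp this with h | h | h | h
    · exact Or.inl h
    · exact Or.inr (Or.inl h)
    · exact Or.inr (Or.inr h)
    · exact absurd (h ▸ hd) hw
  have hPσe : G.dvert (ρ.σ e₃) ≠ v ∧ G.dvert (G.dinv (ρ.σ e₃)) ≠ v := by
    by_contra h
    rcases (hPclass _).mp h with h' | h' | h' | h'
    · exact hw (by rw [← ρ.vert_eq e₃, h']; exact hv1)
    · exact hw (by rw [← ρ.vert_eq e₃, h']; exact hv2)
    · exact hw (by rw [← ρ.vert_eq e₃, h']; exact hv3)
    · exact hσe h'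
  have pf2 : ∀ x : (G.deleteVertex v).D, ρ.σ x.1 ≠ e₃ →
      (G.dvert (ρ.σ x.1) ≠ v ∧ G.dvert (G.dinv (ρ.σ x.1)) ≠ v) := by
    intro x h
    by_contra hh
    rcases (hPclass _).mp hh with h' | h' | h' | h'
    · exact x.2.1 (by rw [← ρ.vert_eq x.1, h']; exact hv1)
    · exact x.2.1 (by rw [← ρ.vert_eq x.1, h']; exact hv2)
    · exact x.2.1 (by rw [← ρ.vert_eq x.1, h']; exact hv3)
    · exact h h'
  let F : (G.deleteVertex v).D → (G.deleteVertex v).D := fun x =>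
    if h : ρ.σ x.1 = e₃ then ⟨ρ.σ e₃, hPσe⟩ else ⟨ρ.σ x.1, pf2 x h⟩
  have hF : ∀ x, (F x).1 = if ρ.σ x.1 = e₃ then ρ.σ e₃ else ρ.σ x.1 := by
    intro x
    by_cases h : ρ.σ x.1 = e₃ <;> simp [F, h]
  have hFinj : Function.Injective F := by
    intro x y h
    have h' := congrArg Subtype.val h
    rw [hF, hF] at h'
    split_ifs at h' with h1 h2 h2
    · exact Subtype.ext (ρ.σ.injective (h1.trans h2.symm))
    · exfalso
      have he := ρ.σ.injective h'
      exact y.2.2 (by rw [← he, hinve]; exact hv3)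
    · exfalso
      have he := ρ.σ.injective h'
      exact x.2.2 (by rw [he, hinve]; exact hv3)
    · exact Subtype.ext (ρ.σ.injective h')
  let σ' : Equiv.Perm (G.deleteVertex v).D :=
    Equiv.ofBijective F (Finite.injective_iff_bijective.mp hFinj)
  have hcompat : ∀ x : (G.deleteVertex v).D,
      (σ' x).1 = if ρ.σ x.1 = e₃ then ρ.σ e₃ else ρ.σ x.1 := fun x => hF x
  refine ⟨⟨σ', ?_, ?_⟩, ?_⟩
  · intro x
    apply Subtype.ext
    show G.dvert ((σ' x).1) = G.dvert x.1
    rw [hcompat x]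
    by_cases h : ρ.σ x.1 = e₃
    · rw [if_pos h, ρ.vert_eq e₃, ← h, ρ.vert_eq x.1]
    · rw [if_neg h, ρ.vert_eq]
  · intro x y hv'
    have hvv : G.dvert x.1 = G.dvert y.1 := congrArg Subtype.val hv'
    obtain ⟨k, hk⟩ := ρ.orbit x.1 y.1 hvv
    exact skip_pow G v e₃ ρ.σ σ' hcompat (by rw [hinve]; exact hv3) k x y hk
  · rcases rot_at_v G v d₁ d₂ d₃ ρ hv1 hv2 hv3 h12 h13 h23 hall3 with
      ⟨ha, hb, hc⟩ | ⟨ha, hb, hc⟩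
    · exact face_step G v d₁ d₂ d₃ e₃ d₁ d₂ hv1 hv2 hv3 hw hinv1 hinv3 hPclass
        (Or.inl ⟨rfl, rfl⟩) ρ _ hc ha hb hσe hcompat
    · exact face_step G v d₁ d₂ d₃ e₃ d₂ d₁ hv1 hv2 hv3 hw hinv1 hinv3 hPclass
        (Or.inr ⟨rfl, rfl⟩) ρ _ hb hc ha hσe hcompat

lemma exists_rs_extend (G : Multigraph) (v : G.V) (d₁ d₂ d₃ e₃ : G.D)
    (hv1 : G.dvert d₁ = v) (hv2 : G.dvert d₂ = v) (hv3 : G.dvert d₃ = v)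
    (hw : G.dvert e₃ ≠ v)
    (hinv1 : G.dinv d₁ = d₂) (hinv3 : G.dinv d₃ = e₃)
    (hPclass : ∀ x : G.D, ¬(G.dvert x ≠ v ∧ G.dvert (G.dinv x) ≠ v) ↔
      (x = d₁ ∨ x = d₂ ∨ x = d₃ ∨ x = e₃))
    (a₀ : G.D) (ha₀v : G.dvert a₀ = G.dvert e₃) (ha₀e : a₀ ≠ e₃)
    (ρ' : (G.deleteVertex v).RotationSystem) :
    ∃ ρ : G.RotationSystem, G.faceCount ρ = (G.deleteVertex v).faceCount ρ' + 1 := by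
  have hinve : G.dinv e₃ = d₃ := by rw [← hinv3, G.dinv_invol]
  have hinv2 : G.dinv d₂ = d₁ := by rw [← hinv1, G.dinv_invol]
  have h12 : d₁ ≠ d₂ := fun h => G.dinv_ne d₁ (hinv1.trans h.symm)
  have h13 : d₁ ≠ d₃ := fun h => hw (by rw [← hinv3, ← h, hinv1]; exact hv2)
  have h23 : d₂ ≠ d₃ := fun h => hw (by rw [← hinv3, ← h, hinv2]; exact hv1)
  have hwa : G.dvert a₀ ≠ v := by rw [ha₀v]; exact hw
  have ha1 : a₀ ≠ d₁ := fun h => hwa (h ▸ hv1)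
  have ha2 : a₀ ≠ d₂ := fun h => hwa (h ▸ hv2)
  have ha3 : a₀ ≠ d₃ := fun h => hwa (h ▸ hv3)
  have he1 : e₃ ≠ d₁ := fun h => hw (h ▸ hv1)
  have he2 : e₃ ≠ d₂ := fun h => hw (h ▸ hv2)
  have he3 : e₃ ≠ d₃ := fun h => hw (h ▸ hv3)
  have hn1 : ¬(G.dvert d₁ ≠ v ∧ G.dvert (G.dinv d₁) ≠ v) := fun h => h.1 hv1
  have hn2 : ¬(G.dvert d₂ ≠ v ∧ G.dvert (G.dinv d₂) ≠ v) := fun h => h.1 hv2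
  have hn3 : ¬(G.dvert d₃ ≠ v ∧ G.dvert (G.dinv d₃) ≠ v) := fun h => h.1 hv3
  have hne₃ : ¬(G.dvert e₃ ≠ v ∧ G.dvert (G.dinv e₃) ≠ v) := fun h =>
    h.2 (by rw [hinve]; exact hv3)
  have hPa₀ : G.dvert a₀ ≠ v ∧ G.dvert (G.dinv a₀) ≠ v := by
    by_contra h
    rcases (hPclass a₀).mp h with h' | h' | h' | h'
    · exact ha1 h'
    · exact ha2 h'
    · exact ha3 h'
    · exact ha₀e h'
  haveI hdecP : DecidablePred (fun d : G.D => G.dvert d ≠ v ∧ G.dvert (G.dinv d) ≠ v) :=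
    fun _ => instDecidableAnd
  let eqv : (G.deleteVertex v).D ≃
      {d : G.D // G.dvert d ≠ v ∧ G.dvert (G.dinv d) ≠ v} := Equiv.refl _
  let τ : Equiv.Perm G.D := ρ'.σ.extendDomain eqv
  have hτ : ∀ (b : G.D) (h : G.dvert b ≠ v ∧ G.dvert (G.dinv b) ≠ v),
      τ b = (ρ'.σ ⟨b, h⟩).1 := by
    intro b h
    exact (Equiv.Perm.extendDomain_apply_subtype ρ'.σ eqv h).trans rfl
  have hτn : ∀ b : G.D, ¬(G.dvert b ≠ v ∧ G.dvert (G.dinv b) ≠ v) → τ b = b :=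
    fun b h => Equiv.Perm.extendDomain_apply_not_subtype _ _ h
  let σ : Equiv.Perm G.D := τ * Equiv.swap a₀ e₃ * Equiv.swap d₁ d₃ * Equiv.swap d₁ d₂
  have happ : ∀ x, σ x = τ (Equiv.swap a₀ e₃ (Equiv.swap d₁ d₃ (Equiv.swap d₁ d₂ x))) :=
    fun x => rfl
  have E1 : σ d₁ = d₂ := by
    rw [happ, Equiv.swap_apply_left,
      Equiv.swap_apply_of_ne_of_ne (Ne.symm h12) h23,
      Equiv.swap_apply_of_ne_of_ne (Ne.symm ha2) (Ne.symm he2), hτn _ hn2]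
  have E2 : σ d₂ = d₃ := by
    rw [happ, Equiv.swap_apply_right, Equiv.swap_apply_left,
      Equiv.swap_apply_of_ne_of_ne (Ne.symm ha3) (Ne.symm he3), hτn _ hn3]
  have E3 : σ d₃ = d₁ := by
    rw [happ, Equiv.swap_apply_of_ne_of_ne (Ne.symm h13) (Ne.symm h23),
      Equiv.swap_apply_right,
      Equiv.swap_apply_of_ne_of_ne (Ne.symm ha1) (Ne.symm he1), hτn _ hn1]
  have E4 : σ e₃ = (ρ'.σ ⟨a₀, hPa₀⟩).1 := by
    rw [happ, Equiv.swap_apply_of_ne_of_ne he1 he2,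
      Equiv.swap_apply_of_ne_of_ne he1 he3, Equiv.swap_apply_right, hτ a₀ hPa₀]
  have E5 : σ a₀ = e₃ := by
    rw [happ, Equiv.swap_apply_of_ne_of_ne ha1 ha2,
      Equiv.swap_apply_of_ne_of_ne ha1 ha3, Equiv.swap_apply_left, hτn _ hne₃]
  have E6 : ∀ x : (G.deleteVertex v).D, x.1 ≠ a₀ → σ x.1 = (ρ'.σ x).1 := by
    intro x hx
    have hx1 : x.1 ≠ d₁ := fun h => hn1 (h ▸ x.2)
    have hx2 : x.1 ≠ d₂ := fun h => hn2 (h ▸ x.2)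
    have hx3 : x.1 ≠ d₃ := fun h => hn3 (h ▸ x.2)
    have hxe : x.1 ≠ e₃ := fun h => hne₃ (h ▸ x.2)
    rw [happ, Equiv.swap_apply_of_ne_of_ne hx1 hx2,
      Equiv.swap_apply_of_ne_of_ne hx1 hx3,
      Equiv.swap_apply_of_ne_of_ne hx hxe, hτ x.1 x.2]
    rfl
  have hσP : ∀ x : (G.deleteVertex v).D, (ρ'.σ x).1 ≠ e₃ :=
    fun x h => hne₃ (h ▸ (ρ'.σ x).2)
  have hcompat : ∀ x : (G.deleteVertex v).D,
      (ρ'.σ x).1 = if σ x.1 = e₃ then σ e₃ else σ x.1 := by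
    intro x
    by_cases hx : x.1 = a₀
    · have hxx : x = ⟨a₀, hPa₀⟩ := Subtype.ext hx
      rw [hxx]
      have : σ (⟨a₀, hPa₀⟩ : (G.deleteVertex v).D).1 = e₃ := by
        show σ a₀ = e₃
        exact E5
      rw [this, if_pos rfl, E4]
    · rw [E6 x hx, if_neg (hσP x)]
  -- build the rotation system
  have hvert : ∀ d, G.dvert (σ d) = G.dvert d := by
    intro d
    by_cases hp : G.dvert d ≠ v ∧ G.dvert (G.dinv d) ≠ v
    · by_cases hd : d = a₀
      · rw [hd, E5, ← ha₀v]
      · have := E6 ⟨d, hp⟩ hd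
        rw [this]
        have h2 := ρ'.vert_eq ⟨d, hp⟩
        exact congrArg Subtype.val h2
    · rcases (hPclass d).mp hp with h' | h' | h' | h' <;> rw [h']
      · rw [E1, hv2, hv1]
      · rw [E2, hv3, hv2]
      · rw [E3, hv1, hv3]
      · rw [E4]
        have h2 := congrArg Subtype.val (ρ'.vert_eq ⟨a₀, hPa₀⟩)
        exact h2.trans ha₀v
  have hall3 : ∀ d, G.dvert d = v → d = d₁ ∨ d = d₂ ∨ d = d₃ := by
    intro d hd
    have hnp : ¬(G.dvert d ≠ v ∧ G.dvert (G.dinv d) ≠ v) := fun h => h.1 hd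
    rcases (hPclass d).mp hnp with h | h | h | h
    · exact Or.inl h
    · exact Or.inr (Or.inl h)
    · exact Or.inr (Or.inr h)
    · exact absurd (h ▸ hd) hw
  have cyc : ∀ z z', G.dvert z = v → G.dvert z' = v → ∃ m, (σ ^ m) z = z' := by
    intro z z' hz hz'
    have hz3 := hall3 z hz
    have hz3' := hall3 z' hz'
    rcases hz3 with rfl | rfl | rfl <;> rcases hz3' with rfl | rfl | rfl
    · exact ⟨0, rfl⟩
    · exact ⟨1, by rw [pow_one]; exact E1⟩
    · exact ⟨2, by rw [pow_two, Equiv.Perm.mul_apply, E1]; exact E2⟩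
    · exact ⟨2, by rw [pow_two, Equiv.Perm.mul_apply, E2]; exact E3⟩
    · exact ⟨0, rfl⟩
    · exact ⟨1, by rw [pow_one]; exact E2⟩
    · exact ⟨1, by rw [pow_one]; exact E3⟩
    · exact ⟨2, by rw [pow_two, Equiv.Perm.mul_apply, E3]; exact E1⟩
    · exact ⟨0, rfl⟩
  have hσe3 : σ e₃ ≠ e₃ := fun h => hσP ⟨a₀, hPa₀⟩ (E4.symm.trans h)
  refine ⟨⟨σ, hvert, ?_⟩, ?_⟩
  · -- orbit condition
    intro d d' hdv
    by_cases hp : G.dvert d ≠ v ∧ G.dvert (G.dinv d) ≠ v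
    · by_cases hp' : G.dvert d' ≠ v ∧ G.dvert (G.dinv d') ≠ v
      · obtain ⟨k, hk⟩ := ρ'.orbit ⟨d, hp⟩ ⟨d', hp'⟩ (Subtype.ext hdv)
        exact unskip_pow G v e₃ σ ρ'.σ hcompat k ⟨d, hp⟩ ⟨d', hp'⟩ hk
      · rcases (hPclass d').mp hp' with h' | h' | h' | h'
        · exact absurd (by rw [hdv, h']; exact hv1) hp.1
        · exact absurd (by rw [hdv, h']; exact hv2) hp.1
        · exact absurd (by rw [hdv, h']; exact hv3) hp.1
        · obtain ⟨k, hk⟩ := ρ'.orbit ⟨d, hp⟩ ⟨a₀, hPa₀⟩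
            (Subtype.ext (show G.dvert d = G.dvert a₀ by rw [hdv, h', ha₀v]))
          obtain ⟨m, hm⟩ := unskip_pow G v e₃ σ ρ'.σ hcompat k ⟨d, hp⟩ ⟨a₀, hPa₀⟩ hk
          refine ⟨m + 1, ?_⟩
          rw [h', pow_succ', Equiv.Perm.mul_apply, hm]
          exact E5
    · rcases (hPclass d).mp hp with h' | h' | h' | h'
      · refine cyc d d' (by rw [h']; exact hv1) ?_
        rw [← hdv, h']; exact hv1
      · refine cyc d d' (by rw [h']; exact hv2) ?_
        rw [← hdv, h']; exact hv2
      · refine cyc d d' (by rw [h']; exact hv3) ?_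
        rw [← hdv, h']; exact hv3
      · -- d = e₃
        have hvd' : G.dvert d' = G.dvert e₃ := by rw [← hdv, h']
        by_cases hp' : G.dvert d' ≠ v ∧ G.dvert (G.dinv d') ≠ v
        · obtain ⟨k, hk⟩ := ρ'.orbit (ρ'.σ ⟨a₀, hPa₀⟩) ⟨d', hp'⟩
            (by refine (ρ'.vert_eq _).trans ?_; exact Subtype.ext (ha₀v.trans hvd'.symm))
          obtain ⟨m, hm⟩ :=
            unskip_pow G v e₃ σ ρ'.σ hcompat k (ρ'.σ ⟨a₀, hPa₀⟩) ⟨d', hp'⟩ hk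
          refine ⟨m + 1, ?_⟩
          rw [h', pow_succ, Equiv.Perm.mul_apply, E4]
          exact hm
        · rcases (hPclass d').mp hp' with h'' | h'' | h'' | h''
          · exact absurd (show G.dvert d' = v by rw [h'']; exact hv1)
              (show G.dvert d' ≠ v by rw [hvd']; exact hw)
          · exact absurd (show G.dvert d' = v by rw [h'']; exact hv2)
              (show G.dvert d' ≠ v by rw [hvd']; exact hw)
          · exact absurd (show G.dvert d' = v by rw [h'']; exact hv3)
              (show G.dvert d' ≠ v by rw [hvd']; exact hw)
          · exact ⟨0, by rw [pow_zero, Equiv.Perm.one_apply]; exact h'.trans h''.symm⟩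
  · exact face_step G v d₁ d₂ d₃ e₃ d₁ d₂ hv1 hv2 hv3 hw hinv1 hinv3 hPclass
      (Or.inl ⟨rfl, rfl⟩) _ ρ' E3 E1 E2 hσe3 hcompat

end Multigraph


/-- If `v` is an `α`-vertex of a connected graph `G` — i.e. `v` is incident with a loop
(the darts `d₁`, `dinv d₁`) and with exactly one other, non-loop, edge (the dart `d₃`) —
then `γ_M(G - v) = γ_M(G)`. -/
theorem maxGenus_deleteVertex_alpha (G : Multigraph) (hG : G.Connected) (v : G.V)
    (d₁ d₃ : G.D)
    (hloop₁ : G.dvert d₁ = v) (hloop₂ : G.dvert (G.dinv d₁) = v)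
    (hd₃ : G.dvert d₃ = v) (hd₃' : G.dvert (G.dinv d₃) ≠ v)
    (hall : ∀ d, G.dvert d = v → d = d₁ ∨ d = G.dinv d₁ ∨ d = d₃) :
    (G.deleteVertex v).maxGenus = G.maxGenus := by
  set d₂ := G.dinv d₁ with hd2def
  set e₃ := G.dinv d₃ with he3def
  have hinv1 : G.dinv d₁ = d₂ := rfl
  have hinv3 : G.dinv d₃ = e₃ := rfl
  have hinv2 : G.dinv d₂ = d₁ := by rw [hd2def, G.dinv_invol]
  have hinve : G.dinv e₃ = d₃ := by rw [he3def, G.dinv_invol]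
  have hPclass : ∀ x : G.D, ¬(G.dvert x ≠ v ∧ G.dvert (G.dinv x) ≠ v) ↔
      (x = d₁ ∨ x = d₂ ∨ x = d₃ ∨ x = e₃) := by
    intro x
    constructor
    · intro h
      rcases not_and_or.mp h with h | h
      · rcases hall x (not_not.mp h) with h' | h' | h'
        · exact Or.inl h'
        · exact Or.inr (Or.inl h')
        · exact Or.inr (Or.inr (Or.inl h'))
      · rcases hall _ (not_not.mp h) with h' | h' | h'
        · refine Or.inr (Or.inl ?_)
          rw [← hinv1, ← h', G.dinv_invol]
        · exact Or.inl (Multigraph.dinv_inj (h'.trans hinv1.symm))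
        · refine Or.inr (Or.inr (Or.inr ?_))
          rw [← hinv3, ← h', G.dinv_invol]
    · intro h
      rcases h with rfl | rfl | rfl | rfl
      · exact fun hh => hh.1 hloop₁
      · exact fun hh => hh.1 hloop₂
      · exact fun hh => hh.1 hd₃
      · exact fun hh => hh.2 (by rw [hinve]; exact hd₃)
  have hne12 : d₁ ≠ d₂ := fun h => G.dinv_ne d₁ (hinv1.trans h.symm)
  have h13 : d₁ ≠ d₃ := fun h => hd₃' (by rw [← hinv3, ← h, hinv1]; exact hloop₂)
  have h23 : d₂ ≠ d₃ := fun h => hd₃' (by rw [← hinv3, ← h, hinv2]; exact hloop₁)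
  have he1 : e₃ ≠ d₁ := fun h => hd₃' (by rw [h]; exact hloop₁)
  have he2 : e₃ ≠ d₂ := fun h => hd₃' (by rw [h]; exact hloop₂)
  have he3 : e₃ ≠ d₃ := fun h => hd₃' (by rw [h]; exact hd₃)
  have hd1e : d₁ ≠ e₃ := Ne.symm he1
  have hd2e : d₂ ≠ e₃ := Ne.symm he2
  have hd3e : d₃ ≠ e₃ := Ne.symm he3
  -- vertex count
  have hcardV : Fintype.card G.V = Fintype.card (G.deleteVertex v).V + 1 := by
    have h1 : Fintype.card {u : G.V // ¬ u = v}
        = Fintype.card G.V - Fintype.card {u : G.V // u = v} :=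
      Fintype.card_subtype_compl _
    have h2 : Fintype.card {u : G.V // u = v} = 1 := Fintype.card_subtype_eq v
    have h3 : 0 < Fintype.card G.V := Fintype.card_pos_iff.mpr ⟨v⟩
    have h4 : Fintype.card (G.deleteVertex v).V = Fintype.card {u : G.V // ¬ u = v} :=
      Fintype.card_congr (Equiv.refl _)
    omega
  by_cases hdeg : ∃ a, G.dvert a = G.dvert e₃ ∧ a ≠ e₃
  · -- nondegenerate case
    obtain ⟨a₀, ha₀v, ha₀e⟩ := hdeg
    -- dart count
    have hcardD : Fintype.card G.D = Fintype.card (G.deleteVertex v).D + 4 := by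
      have hq : Fintype.card {x : G.D // ¬(G.dvert x ≠ v ∧ G.dvert (G.dinv x) ≠ v)} = 4 := by
        rw [Fintype.card_congr (Equiv.subtypeEquivRight hPclass)]
        rw [Fintype.card_congr (Equiv.subtypeEquivRight
          (fun x => (by simp [Finset.mem_insert] :
            x ∈ ({d₁, d₂, d₃, e₃} : Finset G.D) ↔ (x = d₁ ∨ x = d₂ ∨ x = d₃ ∨ x = e₃)))).symm]
        rw [Fintype.card_coe]
        rw [Finset.card_insert_of_notMem (by simp [hne12, h13, hd1e]),
          Finset.card_insert_of_notMem (by simp [h23, hd2e]),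
          Finset.card_insert_of_notMem (by simp [hd3e]),
          Finset.card_singleton]
      have h5 : Fintype.card {x : G.D // ¬(G.dvert x ≠ v ∧ G.dvert (G.dinv x) ≠ v)}
          = Fintype.card G.D
            - Fintype.card {x : G.D // G.dvert x ≠ v ∧ G.dvert (G.dinv x) ≠ v} :=
        Fintype.card_subtype_compl _
      have h6 : Fintype.card {x : G.D // G.dvert x ≠ v ∧ G.dvert (G.dinv x) ≠ v}
          ≤ Fintype.card G.D := Fintype.card_subtype_le _
      have h7 : Fintype.card (G.deleteVertex v).D
          = Fintype.card {x : G.D // G.dvert x ≠ v ∧ G.dvert (G.dinv x) ≠ v} :=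
        Fintype.card_congr (Equiv.refl _)
      omega
    have hgen : ∀ (ρ : G.RotationSystem) (ρ' : (G.deleteVertex v).RotationSystem),
        G.faceCount ρ = (G.deleteVertex v).faceCount ρ' + 1 →
        G.embGenus ρ = (G.deleteVertex v).embGenus ρ' := by
      intro ρ ρ' hF
      unfold Multigraph.embGenus Multigraph.edgeCount Multigraph.vertexCount
      rw [hcardD, hcardV, hF]
      congr 1
      have h2 : (Fintype.card (G.deleteVertex v).D + 4) / 2
          = Fintype.card (G.deleteVertex v).D / 2 + 2 := by omega
      rw [h2]
      push_cast
      ring_nf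
    have hset : {k | ∃ ρ' : (G.deleteVertex v).RotationSystem,
          (G.deleteVertex v).embGenus ρ' = k}
        = {k | ∃ ρ : G.RotationSystem, G.embGenus ρ = k} := by
      ext k
      simp only [Set.mem_setOf_eq]
      constructor
      · rintro ⟨ρ', rfl⟩
        obtain ⟨ρ, hF⟩ := Multigraph.exists_rs_extend G v d₁ d₂ d₃ e₃ hloop₁ hloop₂ hd₃ hd₃'
          hinv1 hinv3 hPclass a₀ ha₀v ha₀e ρ'
        exact ⟨ρ, hgen ρ ρ' hF⟩
      · rintro ⟨ρ, rfl⟩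
        have hσe : ρ.σ e₃ ≠ e₃ := fun h => ha₀e (Multigraph.sigma_fix G ρ e₃ h a₀ ha₀v.symm)
        obtain ⟨ρ', hF⟩ := Multigraph.exists_rs_delete G v d₁ d₂ d₃ e₃ hloop₁ hloop₂ hd₃ hd₃'
          hinv1 hinv3 hPclass ρ hσe
        exact ⟨ρ', (hgen ρ ρ' hF).symm⟩
    unfold Multigraph.maxGenus
    exact congrArg sSup hset
  · -- degenerate case
    push_neg at hdeg
    have hvw : G.dvert e₃ ≠ v := hd₃'
    have hVert : ∀ u : G.V, u = v ∨ u = G.dvert e₃ := by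
      intro u
      have hpath := hG.2 u v
      induction hpath using Relation.ReflTransGen.head_induction_on with
      | refl => exact Or.inl rfl
      | head hadj htail ih =>
        obtain ⟨d, hdu, hdc⟩ := hadj
        rcases ih with hc | hc
        · rcases hall (G.dinv d) (by rw [← hc]; exact hdc) with h' | h' | h'
          · have hd : d = d₂ := by rw [← G.dinv_invol d, h', hinv1]
            left; rw [← hdu, hd]; exact hloop₂
          · have hd : d = d₁ := by rw [← G.dinv_invol d, h', hinv2]
            left; rw [← hdu, hd]; exact hloop₁
          · have hd : d = e₃ := by rw [← G.dinv_invol d, h', hinv3]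
            right; rw [← hdu, hd]
        · have h' : G.dinv d = e₃ := hdeg _ (by rw [← hc]; exact hdc)
          have hd : d = d₃ := by rw [← G.dinv_invol d, h', hinve]
          left; rw [← hdu, hd]; exact hd₃
    have hDart : ∀ d : G.D, d = d₁ ∨ d = d₂ ∨ d = d₃ ∨ d = e₃ := by
      intro d
      rcases hVert (G.dvert d) with h | h
      · rcases hall d h with h' | h' | h'
        · exact Or.inl h'
        · exact Or.inr (Or.inl h')
        · exact Or.inr (Or.inr (Or.inl h'))
      · exact Or.inr (Or.inr (Or.inr (hdeg d h)))
    have hE : IsEmpty (G.deleteVertex v).D := by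
      refine ⟨fun x => ?_⟩
      rcases hDart x.1 with h | h | h | h
      · exact x.2.1 (by rw [h]; exact hloop₁)
      · exact x.2.1 (by rw [h]; exact hloop₂)
      · exact x.2.1 (by rw [h]; exact hd₃)
      · exact x.2.2 (by rw [h, hinve]; exact hd₃)
    have hDcard : Fintype.card G.D = 4 := by
      have huniv : (Finset.univ : Finset G.D) = {d₁, d₂, d₃, e₃} := by
        ext x
        simp only [Finset.mem_univ, true_iff, Finset.mem_insert, Finset.mem_singleton]
        exact hDart x
      rw [← Finset.card_univ, huniv,
        Finset.card_insert_of_notMem (by simp [hne12, h13, hd1e]),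
        Finset.card_insert_of_notMem (by simp [h23, hd2e]),
        Finset.card_insert_of_notMem (by simp [hd3e]),
        Finset.card_singleton]
    have hVcard : Fintype.card G.V = 2 := by
      have huniv : (Finset.univ : Finset G.V) = {v, G.dvert e₃} := by
        ext u
        simp only [Finset.mem_univ, true_iff, Finset.mem_insert, Finset.mem_singleton]
        exact hVert u
      rw [← Finset.card_univ, huniv,
        Finset.card_insert_of_notMem (by simp [Ne.symm hvw]),
        Finset.card_singleton]
    have hg0 : ∀ ρ : G.RotationSystem, G.embGenus ρ = 0 := by
      intro ρ
      have hF : 1 ≤ G.faceCount ρ := by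
        haveI : Nonempty (Quot fun (a b : G.D) => ρ.σ (G.dinv a) = b) := ⟨Quot.mk _ d₁⟩
        exact Nat.card_pos
      unfold Multigraph.embGenus Multigraph.edgeCount Multigraph.vertexCount
      rw [hDcard, hVcard]
      rw [Int.toNat_eq_zero]
      have h42 : ((4 : ℕ) / 2 : ℕ) = 2 := rfl
      rw [h42]
      push_cast
      omega
    have hg0' : ∀ ρ' : (G.deleteVertex v).RotationSystem,
        (G.deleteVertex v).embGenus ρ' = 0 := by
      intro ρ'
      haveI := hE
      have hD0 : Fintype.card (G.deleteVertex v).D = 0 := Fintype.card_eq_zero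
      have hV1 : Fintype.card (G.deleteVertex v).V = 1 := by omega
      have hF0 : (G.deleteVertex v).faceCount ρ' = 0 := by
        have hfalse : ∀ q : Quot fun (a b : (G.deleteVertex v).D) =>
            ρ'.σ ((G.deleteVertex v).dinv a) = b, False := by
          intro q
          induction q using Quot.ind with
          | _ a => exact hE.false a
        haveI : IsEmpty (Quot fun (a b : (G.deleteVertex v).D) =>
            ρ'.σ ((G.deleteVertex v).dinv a) = b) := ⟨hfalse⟩
        exact Nat.card_of_isEmpty
      unfold Multigraph.embGenus Multigraph.edgeCount Multigraph.vertexCount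
      rw [hD0, hV1, hF0]
      norm_num
    have ρ'0 : (G.deleteVertex v).RotationSystem :=
      ⟨1, fun d => (hE.false d).elim, fun d => (hE.false d).elim⟩
    have ρG : G.RotationSystem := by
      refine ⟨Equiv.swap d₁ d₃ * Equiv.swap d₁ d₂, ?_, ?_⟩
      · have EG1 : (Equiv.swap d₁ d₃ * Equiv.swap d₁ d₂) d₁ = d₂ := by
          rw [Equiv.Perm.mul_apply, Equiv.swap_apply_left,
            Equiv.swap_apply_of_ne_of_ne (Ne.symm hne12) h23]
        have EG2 : (Equiv.swap d₁ d₃ * Equiv.swap d₁ d₂) d₂ = d₃ := by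
          rw [Equiv.Perm.mul_apply, Equiv.swap_apply_right, Equiv.swap_apply_left]
        have EG3 : (Equiv.swap d₁ d₃ * Equiv.swap d₁ d₂) d₃ = d₁ := by
          rw [Equiv.Perm.mul_apply,
            Equiv.swap_apply_of_ne_of_ne (Ne.symm h13) (Ne.symm h23),
            Equiv.swap_apply_right]
        have EGe : (Equiv.swap d₁ d₃ * Equiv.swap d₁ d₂) e₃ = e₃ := by
          rw [Equiv.Perm.mul_apply, Equiv.swap_apply_of_ne_of_ne he1 he2,
            Equiv.swap_apply_of_ne_of_ne he1 he3]
        intro d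
        rcases hDart d with rfl | rfl | rfl | rfl
        · rw [EG1, hloop₂, hloop₁]
        · rw [EG2, hd₃, hloop₂]
        · rw [EG3, hloop₁, hd₃]
        · rw [EGe]
      · have EG1 : (Equiv.swap d₁ d₃ * Equiv.swap d₁ d₂) d₁ = d₂ := by
          rw [Equiv.Perm.mul_apply, Equiv.swap_apply_left,
            Equiv.swap_apply_of_ne_of_ne (Ne.symm hne12) h23]
        have EG2 : (Equiv.swap d₁ d₃ * Equiv.swap d₁ d₂) d₂ = d₃ := by
          rw [Equiv.Perm.mul_apply, Equiv.swap_apply_right, Equiv.swap_apply_left]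
        have EG3 : (Equiv.swap d₁ d₃ * Equiv.swap d₁ d₂) d₃ = d₁ := by
          rw [Equiv.Perm.mul_apply,
            Equiv.swap_apply_of_ne_of_ne (Ne.symm h13) (Ne.symm h23),
            Equiv.swap_apply_right]
        have EGe : (Equiv.swap d₁ d₃ * Equiv.swap d₁ d₂) e₃ = e₃ := by
          rw [Equiv.Perm.mul_apply, Equiv.swap_apply_of_ne_of_ne he1 he2,
            Equiv.swap_apply_of_ne_of_ne he1 he3]
        intro d d' hdv
        rcases hDart d with rfl | rfl | rfl | rfl <;>
          rcases hDart d' with rfl | rfl | rfl | rfl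
        · exact ⟨0, rfl⟩
        · exact ⟨1, by rw [pow_one]; exact EG1⟩
        · exact ⟨2, by rw [pow_two, Equiv.Perm.mul_apply, EG1]; exact EG2⟩
        · exact absurd ((hloop₁.symm.trans hdv).symm) hvw
        · exact ⟨2, by rw [pow_two, Equiv.Perm.mul_apply, EG2]; exact EG3⟩
        · exact ⟨0, rfl⟩
        · exact ⟨1, by rw [pow_one]; exact EG2⟩
        · exact absurd ((hloop₂.symm.trans hdv).symm) hvw
        · exact ⟨1, by rw [pow_one]; exact EG3⟩
        · exact ⟨2, by rw [pow_two, Equiv.Perm.mul_apply, EG3]; exact EG1⟩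
        · exact ⟨0, rfl⟩
        · exact absurd ((hd₃.symm.trans hdv).symm) hvw
        · exact absurd (hdv.trans hloop₁) hvw
        · exact absurd (hdv.trans hloop₂) hvw
        · exact absurd (hdv.trans hd₃) hvw
        · exact ⟨0, rfl⟩
    have hset : {k | ∃ ρ' : (G.deleteVertex v).RotationSystem,
          (G.deleteVertex v).embGenus ρ' = k}
        = {k | ∃ ρ : G.RotationSystem, G.embGenus ρ = k} := by
      ext k
      simp only [Set.mem_setOf_eq]
      constructor
      · rintro ⟨ρ', rfl⟩
        exact ⟨ρG, (hg0 ρG).trans (hg0' ρ').symm⟩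
      · rintro ⟨ρ, rfl⟩
        exact ⟨ρ'0, (hg0' ρ'0).trans (hg0 ρ).symm⟩
    unfold Multigraph.maxGenus
    exact congrArg sSup hset
end
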